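/- arXiv:1911.10643 — 5 statements merged into one kernel-verified Lean document; each statement's English description precedes it below -/
import Mathlib

section
/- Let p be a prime and suppose we are given a commutative diagram of finitely generated ℤ_p-modules with exact rows 0 → A' → A → A'' → 0 and 0 → B' → B → B'' → 0, and vertical homomorphisms π' : A' → B', π : A → B, π'' : A'' → B'' commuting with the horizontal maps. If any two of π', π, π'' have finite kernel and finite cokernel, then so does the third, and ∇(π) = ∇(π') + ∇(π''). -/
open TensorProduct

/-- The length of a module over a ring `R`: the supremum of the lengths of strictly
increasing chains of submodules. -/
noncomputable def moduleLength (R M : Type*) [Ring R] [AddCommGroup M] [Module R M] : ℕ∞ :=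
  WithBot.unbotD 0 (Order.krullDim (Submodule R M))

/-- `π` has finite kernel and finite cokernel. -/
def HasFiniteKerCoker {p : ℕ} [Fact p.Prime] {M N : Type*} [AddCommGroup M] [Module ℤ_[p] M]
    [AddCommGroup N] [Module ℤ_[p] N] (π : M →ₗ[ℤ_[p]] N) : Prop :=
  Finite (LinearMap.ker π) ∧ Finite (N ⧸ LinearMap.range π)

/-- The Kobayashi rank
`∇(π) = length_{ℤ_p}(ker π) − length_{ℤ_p}(coker π) + dim_{ℚ_p}(N ⊗_{ℤ_p} ℚ_p)`. -/
noncomputable def kobayashiRank {p : ℕ} [Fact p.Prime] {M N : Type*} [AddCommGroup M]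
    [Module ℤ_[p] M] [AddCommGroup N] [Module ℤ_[p] N] (π : M →ₗ[ℤ_[p]] N) : ℤ :=
  ((moduleLength ℤ_[p] (LinearMap.ker π)).toNat : ℤ)
    - ((moduleLength ℤ_[p] (N ⧸ LinearMap.range π)).toNat : ℤ)
    + (Module.finrank ℚ_[p] (ℚ_[p] ⊗[ℤ_[p]] N) : ℤ)

section Aux

theorem KobAux.card_pow_p {p : ℕ} [hp : Fact p.Prime] (M : Type*) [AddCommGroup M]
    [Module ℤ_[p] M] [Finite M] : ∃ n : ℕ, Nat.card M = p ^ n := by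
  refine ⟨_, Nat.eq_prime_pow_of_unique_prime_dvd Nat.card_pos.ne' ?_⟩
  intro q hq hdvd
  by_contra hne
  have := Fintype.ofFinite M
  rw [Nat.card_eq_fintype_card] at hdvd
  have : Fact q.Prime := ⟨hq⟩
  obtain ⟨x, hx⟩ := exists_prime_addOrderOf_dvd_card q hdvd
  have hu : IsUnit (q : ℤ_[p]) := by
    rw [PadicInt.isUnit_iff]
    refine le_antisymm (PadicInt.norm_le_one _) ?_
    by_contra h
    push_neg at h
    have : ((q : ℤ) : ℤ_[p]) = (q : ℤ_[p]) := by push_cast; ring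
    rw [← this, PadicInt.norm_int_lt_one_iff_dvd] at h
    exact hne ((Nat.prime_dvd_prime_iff_eq hp.out hq).mp (by exact_mod_cast h)).symm
  have hqx : (q : ℤ_[p]) • x = 0 := by
    rw [Nat.cast_smul_eq_nsmul, ← hx, addOrderOf_nsmul_eq_zero]
  have hx0 : x = 0 := by
    obtain ⟨u, hu⟩ := hu
    have : ((u⁻¹ : ℤ_[p]ˣ) : ℤ_[p]) • ((q : ℤ_[p]) • x) = x := by
      rw [← mul_smul, ← hu, Units.inv_mul, one_smul]
    rw [← this, hqx, smul_zero]
  rw [hx0, addOrderOf_zero] at hx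
  exact hq.one_lt.ne' hx.symm

theorem KobAux.card_eq_pow_factorization {p : ℕ} [hp : Fact p.Prime] (M : Type*) [AddCommGroup M]
    [Module ℤ_[p] M] [Finite M] : Nat.card M = p ^ ((Nat.card M).factorization p) := by
  obtain ⟨n, hn⟩ := KobAux.card_pow_p (p := p) M
  rw [hn, Nat.Prime.factorization_pow hp.out]
  simp

theorem KobAux.card_lt_card_of_lt {p : ℕ} [hp : Fact p.Prime] {M : Type*} [AddCommGroup M]
    [Module ℤ_[p] M] [Finite M] {N N' : Submodule ℤ_[p] M} (h : N < N') :
    Nat.card N < Nat.card N' := by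
  rw [← SetLike.coe_ssubset_coe] at h
  have h2 : ((N : Set M)).ncard < ((N' : Set M)).ncard := Set.ncard_lt_ncard h (Set.toFinite _)
  rwa [← Nat.card_coe_set_eq, ← Nat.card_coe_set_eq] at h2

theorem KobAux.strictMono_fin_le {l n : ℕ} (f : Fin (l + 1) → ℕ) (hf : StrictMono f)
    (hn : f (Fin.last l) ≤ n) : l ≤ n := by
  have key : ∀ k (hk : k < l + 1), k ≤ f ⟨k, hk⟩ := by
    intro k
    induction k with
    | zero => simp
    | succ m ih =>
      intro hk
      have hm : m < l + 1 := Nat.lt_of_succ_lt hk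
      have h2 := hf (show (⟨m, hm⟩ : Fin (l+1)) < ⟨m + 1, hk⟩ by simp [Fin.mk_lt_mk])
      have h1 := ih hm
      omega
  have := key l (Nat.lt_succ_self l)
  calc l ≤ f ⟨l, Nat.lt_succ_self l⟩ := this
    _ = f (Fin.last l) := rfl
    _ ≤ n := hn

theorem KobAux.krullDim_le_of_card {p : ℕ} [hp : Fact p.Prime] (M : Type*) [AddCommGroup M]
    [Module ℤ_[p] M] [Finite M] {n : ℕ} (h : Nat.card M = p ^ n) :
    Order.krullDim (Submodule ℤ_[p] M) ≤ (n : ℕ∞) := by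
  rw [Order.krullDim_eq_iSup_length]
  rw [WithBot.coe_le_coe]
  refine iSup_le fun s => ?_
  rw [Nat.cast_le]
  set e : Fin (s.length + 1) → ℕ := fun i => (Nat.card (s i)).factorization p with he
  have hcard : ∀ i, Nat.card (s i) = p ^ e i := fun i => KobAux.card_eq_pow_factorization _
  have hmono : StrictMono e := by
    intro i j hij
    have hc := KobAux.card_lt_card_of_lt (s.strictMono hij)
    rw [hcard i, hcard j] at hc
    exact (Nat.pow_lt_pow_iff_right hp.out.one_lt).mp hc
  refine KobAux.strictMono_fin_le e hmono ?_
  have hle : Nat.card (s (Fin.last s.length)) ≤ Nat.card M :=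
    Nat.card_le_card_of_injective _ Subtype.val_injective
  rw [hcard, h] at hle
  exact (Nat.pow_le_pow_iff_right hp.out.one_lt).mp hle

universe u

theorem KobAux.exists_chain {p : ℕ} [hp : Fact p.Prime] :
    ∀ (n : ℕ) (M : Type u) [AddCommGroup M] [Module ℤ_[p] M] [Finite M],
      Nat.card M = p ^ n → ∃ s : LTSeries (Submodule ℤ_[p] M), s.length = n := by
  intro n
  induction n with
  | zero => intro M _ _ _ _; exact ⟨RelSeries.singleton _ ⊥, rfl⟩
  | succ n ih =>
    intro M _ _ _ hM
    have := Fintype.ofFinite M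
    have hdvd : p ∣ Fintype.card M := by
      rw [← Nat.card_eq_fintype_card, hM]; exact dvd_pow_self p (Nat.succ_ne_zero n)
    obtain ⟨x, hx⟩ := exists_prime_addOrderOf_dvd_card p hdvd
    have hx0 : x ≠ 0 := by
      intro h; rw [h, addOrderOf_zero] at hx; exact hp.out.one_lt.ne' hx.symm
    set N : Submodule ℤ_[p] M := Submodule.span ℤ_[p] {x} with hN
    have hpx : (p : ℤ_[p]) • x = 0 := by
      rw [Nat.cast_smul_eq_nsmul, ← hx, addOrderOf_nsmul_eq_zero]
    have hsurj : Function.Surjective (fun k : Fin p => (⟨(k : ℕ) • x,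
        by rw [← Nat.cast_smul_eq_nsmul ℤ_[p]]; exact N.smul_mem _ (Submodule.mem_span_singleton_self x)⟩ : N)) := by
      rintro ⟨y, hy⟩
      obtain ⟨a, ha⟩ := Submodule.mem_span_singleton.mp hy
      have hspec := PadicInt.appr_spec 1 a
      obtain ⟨c, hc⟩ := Ideal.mem_span_singleton'.mp hspec
      refine ⟨⟨a.appr 1, by simpa using PadicInt.appr_lt a 1⟩, Subtype.ext ?_⟩
      have key : ((a.appr 1 : ℕ) : ℤ_[p]) • x = y := by
        have step : a • x = ((a.appr 1 : ℕ) : ℤ_[p]) • x + c • ((p : ℤ_[p]) • x) := by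
          rw [← mul_smul, ← add_smul]
          congr 1
          rw [pow_one] at hc
          linear_combination -hc
        rw [hpx, smul_zero, add_zero] at step
        rw [← step, ha]
      rw [Nat.cast_smul_eq_nsmul] at key
      exact key
    have hcardN_le : Nat.card N ≤ p := by
      have := Nat.card_le_card_of_surjective _ hsurj
      simpa using this
    have hNtriv : Nontrivial N := by
      refine ⟨⟨0, ⟨x, Submodule.mem_span_singleton_self x⟩, fun hcon => hx0 ?_⟩⟩
      have h3 := congrArg Subtype.val hcon
      simpa using h3.symm
    have hcardN : Nat.card N = p := by
      obtain ⟨j, hj⟩ := KobAux.card_pow_p (p := p) N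
      have h2 : 2 ≤ Nat.card N := Finite.one_lt_card_iff_nontrivial.mpr hNtriv
      rw [hj] at h2 hcardN_le
      have hj1 : j ≤ 1 := by
        have : p ^ j ≤ p ^ 1 := by rwa [pow_one]
        exact (Nat.pow_le_pow_iff_right hp.out.one_lt).mp this
      have hj0 : j ≠ 0 := by
        intro h0
        rw [h0, pow_zero] at h2
        omega
      have : j = 1 := by omega
      rw [hj, this, pow_one]
    have hcardQ : Nat.card (M ⧸ N) = p ^ n := by
      have hL : Nat.card M = Nat.card (M ⧸ N) * Nat.card N :=
        AddSubgroup.card_eq_card_quotient_mul_card_addSubgroup N.toAddSubgroup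
      rw [hM, hcardN] at hL
      have hppos := hp.out.pos
      have : p ^ (n+1) = p ^ n * p := by ring
      rw [this] at hL
      exact (Nat.eq_of_mul_eq_mul_right hppos hL.symm)
    obtain ⟨t, ht⟩ := ih (M ⧸ N) hcardQ
    refine ⟨RelSeries.cons (t.map (Submodule.comap N.mkQ) (fun u v huv => by
      rw [← Submodule.comapMkQOrderEmbedding_eq, ← Submodule.comapMkQOrderEmbedding_eq]
      exact (Submodule.comapMkQOrderEmbedding N).strictMono huv)) ⊥ ?_, by
      rw [RelSeries.cons_length]
      show t.length + 1 = n + 1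
      omega⟩
    show ⊥ < Submodule.comap N.mkQ t.head
    rw [bot_lt_iff_ne_bot]
    intro hcon
    have hxN : x ∈ Submodule.comap N.mkQ t.head := by
      have : N.mkQ x = 0 := by
        rw [← LinearMap.mem_ker, Submodule.ker_mkQ]
        exact Submodule.mem_span_singleton_self x
      rw [Submodule.mem_comap, this]
      exact zero_mem _
    rw [hcon] at hxN
    exact hx0 (by simpa using hxN)

theorem KobAux.moduleLength_toNat {p : ℕ} [hp : Fact p.Prime] (M : Type u) [AddCommGroup M]
    [Module ℤ_[p] M] [Finite M] {n : ℕ} (h : Nat.card M = p ^ n) :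
    (moduleLength ℤ_[p] M).toNat = n := by
  obtain ⟨s, hs⟩ := KobAux.exists_chain n M h
  have hlb : ((n : ℕ∞) : WithBot ℕ∞) ≤ Order.krullDim (Submodule ℤ_[p] M) := by
    have := Order.LTSeries.length_le_krullDim s
    rw [hs] at this
    exact_mod_cast this
  have heq : Order.krullDim (Submodule ℤ_[p] M) = ((n : ℕ∞) : WithBot ℕ∞) :=
    le_antisymm (KobAux.krullDim_le_of_card M h) hlb
  rw [moduleLength, heq, WithBot.unbotD_coe]
  simp

theorem KobAux.card_eq_ker_mul_range {G H : Type*} [AddCommGroup G] [AddCommGroup H]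
    (f : G →+ H) : Nat.card G = Nat.card f.ker * Nat.card f.range := by
  rw [AddSubgroup.card_eq_card_quotient_mul_card_addSubgroup f.ker,
    Nat.card_congr (QuotientAddGroup.quotientKerEquivRange f).toEquiv, mul_comm]

theorem KobAux.finite_of_ker_range {G H : Type*} [AddCommGroup G] [AddCommGroup H] (f : G →+ H)
    (h1 : Finite f.ker) (h2 : Finite f.range) : Finite G := by
  have : Finite (G ⧸ f.ker) :=
    Finite.of_equiv _ (QuotientAddGroup.quotientKerEquivRange f).toEquiv.symm
  exact Finite.of_equiv _ (AddSubgroup.addGroupEquivQuotientProdAddSubgroup (s := f.ker)).symm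

theorem KobAux.rank_additive {p : ℕ} [Fact p.Prime] {B' B B'' : Type*}
    [AddCommGroup B'] [Module ℤ_[p] B'] [Module.Finite ℤ_[p] B']
    [AddCommGroup B] [Module ℤ_[p] B] [Module.Finite ℤ_[p] B]
    [AddCommGroup B''] [Module ℤ_[p] B''] [Module.Finite ℤ_[p] B'']
    (iB : B' →ₗ[ℤ_[p]] B) (pB : B →ₗ[ℤ_[p]] B'')
    (hiB : Function.Injective iB) (hpB : Function.Surjective pB)
    (hB : Function.Exact iB pB) :
    Module.finrank ℚ_[p] (ℚ_[p] ⊗[ℤ_[p]] B)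
      = Module.finrank ℚ_[p] (ℚ_[p] ⊗[ℤ_[p]] B') + Module.finrank ℚ_[p] (ℚ_[p] ⊗[ℤ_[p]] B'') := by
  have hflat : Module.Flat ℤ_[p] ℚ_[p] := IsLocalization.flat ℚ_[p] (nonZeroDivisors ℤ_[p])
  set f := iB.baseChange ℚ_[p] with hf
  set g := pB.baseChange ℚ_[p] with hg
  have hfinj : Function.Injective f := by
    have := Module.Flat.lTensor_preserves_injective_linearMap (M := ℚ_[p]) iB hiB
    exact this
  have hgsurj : Function.Surjective g := LinearMap.lTensor_surjective ℚ_[p] hpB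
  have hexact : Function.Exact f g := Module.Flat.lTensor_exact ℚ_[p] hB
  have h1 := LinearMap.finrank_range_add_finrank_ker g
  have h2 : LinearMap.range g = ⊤ := LinearMap.range_eq_top.mpr hgsurj
  have h3 : LinearMap.ker g = LinearMap.range f := (LinearMap.exact_iff.mp hexact)
  rw [h2, h3] at h1
  have h4 : Module.finrank ℚ_[p] (LinearMap.range f) = Module.finrank ℚ_[p] (ℚ_[p] ⊗[ℤ_[p]] B') :=
    (LinearEquiv.ofInjective f hfinj).symm.finrank_eq
  rw [h4] at h1
  rw [← h1]
  simp [finrank_top]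
  ring

end Aux

theorem kobayashiRank_additive_of_comm_diagram {p : ℕ} [Fact p.Prime]
    {A' A A'' B' B B'' : Type*}
    [AddCommGroup A'] [Module ℤ_[p] A'] [Module.Finite ℤ_[p] A']
    [AddCommGroup A] [Module ℤ_[p] A] [Module.Finite ℤ_[p] A]
    [AddCommGroup A''] [Module ℤ_[p] A''] [Module.Finite ℤ_[p] A'']
    [AddCommGroup B'] [Module ℤ_[p] B'] [Module.Finite ℤ_[p] B']
    [AddCommGroup B] [Module ℤ_[p] B] [Module.Finite ℤ_[p] B]
    [AddCommGroup B''] [Module ℤ_[p] B''] [Module.Finite ℤ_[p] B'']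
    (iA : A' →ₗ[ℤ_[p]] A) (pA : A →ₗ[ℤ_[p]] A'')
    (iB : B' →ₗ[ℤ_[p]] B) (pB : B →ₗ[ℤ_[p]] B'')
    (hiA : Function.Injective iA) (hpA : Function.Surjective pA)
    (hA : Function.Exact iA pA)
    (hiB : Function.Injective iB) (hpB : Function.Surjective pB)
    (hB : Function.Exact iB pB)
    (π' : A' →ₗ[ℤ_[p]] B') (π : A →ₗ[ℤ_[p]] B) (π'' : A'' →ₗ[ℤ_[p]] B'')
    (hcomm₁ : π ∘ₗ iA = iB ∘ₗ π') (hcomm₂ : π'' ∘ₗ pA = pB ∘ₗ π)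
    (htwo : (HasFiniteKerCoker π' ∧ HasFiniteKerCoker π) ∨
      (HasFiniteKerCoker π' ∧ HasFiniteKerCoker π'') ∨
      (HasFiniteKerCoker π ∧ HasFiniteKerCoker π'')) :
    HasFiniteKerCoker π' ∧ HasFiniteKerCoker π ∧ HasFiniteKerCoker π'' ∧
      kobayashiRank π = kobayashiRank π' + kobayashiRank π'' := by
  have hp : Fact p.Prime := inferInstance
  have hc₁ : ∀ a : A', π (iA a) = iB (π' a) := fun a => LinearMap.congr_fun hcomm₁ a
  have hc₂ : ∀ a : A, π'' (pA a) = pB (π a) := fun a => LinearMap.congr_fun hcomm₂ a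
  -- the six-term maps
  have hker₁ : ∀ x ∈ LinearMap.ker π', iA x ∈ LinearMap.ker π := by
    intro x hx
    rw [LinearMap.mem_ker] at hx ⊢
    rw [hc₁ x, hx, map_zero]
  have hker₂ : ∀ x ∈ LinearMap.ker π, pA x ∈ LinearMap.ker π'' := by
    intro x hx
    rw [LinearMap.mem_ker] at hx ⊢
    rw [hc₂ x, hx, map_zero]
  let f₁ : LinearMap.ker π' →ₗ[ℤ_[p]] LinearMap.ker π := iA.restrict hker₁
  let f₂ : LinearMap.ker π →ₗ[ℤ_[p]] LinearMap.ker π'' := pA.restrict hker₂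
  have hle₃ : LinearMap.range π' ≤ (LinearMap.range π).comap iB := by
    rintro _ ⟨a', rfl⟩
    exact ⟨iA a', hc₁ a'⟩
  have hle₄ : LinearMap.range π ≤ (LinearMap.range π'').comap pB := by
    rintro _ ⟨a, rfl⟩
    exact ⟨pA a, hc₂ a⟩
  let f₃ : (B' ⧸ LinearMap.range π') →ₗ[ℤ_[p]] (B ⧸ LinearMap.range π) :=
    Submodule.mapQ _ _ iB hle₃
  let f₄ : (B ⧸ LinearMap.range π) →ₗ[ℤ_[p]] (B'' ⧸ LinearMap.range π'') :=
    Submodule.mapQ _ _ pB hle₄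
  have hm3 : ∀ b' : B', f₃ (Submodule.Quotient.mk b') = Submodule.Quotient.mk (iB b') :=
    fun b' => rfl
  have hm4 : ∀ b : B, f₄ (Submodule.Quotient.mk b) = Submodule.Quotient.mk (pB b) :=
    fun b => rfl
  -- the connecting map
  have hex : ∀ z : LinearMap.ker π'', ∃ w : B' × A, pA w.2 = (z : A'') ∧ iB w.1 = π w.2 := by
    intro z
    obtain ⟨a, ha⟩ := hpA (z : A'')
    have hz := z.2
    rw [LinearMap.mem_ker] at hz
    have h0 : pB (π a) = 0 := by rw [← hc₂ a, ha, hz]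
    obtain ⟨b', hb'⟩ := (hB (π a)).mp h0
    exact ⟨(b', a), ha, hb'⟩
  let dfun : LinearMap.ker π'' → (B' ⧸ LinearMap.range π') :=
    fun z => Submodule.Quotient.mk (hex z).choose.1
  have hkey : ∀ (z : LinearMap.ker π'') (a : A) (b' : B'), pA a = (z : A'') → iB b' = π a →
      dfun z = Submodule.Quotient.mk b' := by
    intro z a b' ha hb
    have hw := (hex z).choose_spec
    show Submodule.Quotient.mk (hex z).choose.1 = Submodule.Quotient.mk b'
    rw [Submodule.Quotient.eq]
    have h5 : pA ((hex z).choose.2 - a) = 0 := by rw [map_sub, hw.1, ha, sub_self]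
    obtain ⟨a', ha'⟩ := (hA ((hex z).choose.2 - a)).mp h5
    rw [LinearMap.mem_range]
    refine ⟨a', hiB ?_⟩
    have hstep : iB (π' a') = π (hex z).choose.2 - π a := by
      rw [← hc₁ a', ha', map_sub]
    rw [hstep, map_sub, hw.2, hb]
  have hspec : ∀ z : LinearMap.ker π'', ∃ (a : A) (b' : B'), pA a = (z : A'') ∧ iB b' = π a ∧
      dfun z = Submodule.Quotient.mk b' :=
    fun z => ⟨(hex z).choose.2, (hex z).choose.1, (hex z).choose_spec.1,
      (hex z).choose_spec.2, rfl⟩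
  let δ : LinearMap.ker π'' →+ (B' ⧸ LinearMap.range π') := {
    toFun := dfun
    map_zero' := by
      show dfun 0 = 0
      have h := hkey 0 0 0 (by simp) (by simp)
      simpa using h
    map_add' := by
      intro z w
      show dfun (z + w) = dfun z + dfun w
      obtain ⟨az, bz, h1z, h2z, h3z⟩ := hspec z
      obtain ⟨aw, bw, h1w, h2w, h3w⟩ := hspec w
      have h := hkey (z + w) (az + aw) (bz + bw) (by simp [map_add, h1z, h1w])
        (by rw [map_add, map_add, h2z, h2w])
      rw [h, h3z, h3w]
      exact Submodule.Quotient.mk_add _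
    }
  let f₁' := f₁.toAddMonoidHom
  let f₂' := f₂.toAddMonoidHom
  let f₃' := f₃.toAddMonoidHom
  let f₄' := f₄.toAddMonoidHom
  have hf₁inj : Function.Injective f₁' := fun x y hxy =>
    Subtype.ext (hiA (congrArg Subtype.val hxy))
  -- exactness at ker π
  have E2 : f₂'.ker = f₁'.range := by
    ext x
    simp only [AddMonoidHom.mem_ker, AddMonoidHom.mem_range]
    constructor
    · intro hx
      have hx1 : pA (x : A) = 0 := congrArg Subtype.val hx
      obtain ⟨a', ha'⟩ := (hA (x : A)).mp hx1
      have hxk := x.2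
      rw [LinearMap.mem_ker] at hxk
      have hπ'img : iB (π' a') = 0 := by rw [← hc₁ a', ha', hxk]
      have hπ' : π' a' = 0 := hiB (by rw [hπ'img, map_zero])
      exact ⟨⟨a', by rw [LinearMap.mem_ker, hπ']⟩, Subtype.ext ha'⟩
    · rintro ⟨y, rfl⟩
      exact Subtype.ext (hA.apply_apply_eq_zero (y : A'))
  -- exactness at ker π''
  have E3 : δ.ker = f₂'.range := by
    ext z
    simp only [AddMonoidHom.mem_ker, AddMonoidHom.mem_range]
    constructor
    · intro hz
      obtain ⟨a, b', h1, h2, h3⟩ := hspec z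
      have hmk : Submodule.Quotient.mk b' = (0 : B' ⧸ LinearMap.range π') := by
        rw [← h3]; exact hz
      obtain ⟨a₁, ha₁⟩ := (Submodule.Quotient.mk_eq_zero _).mp hmk
      have hxker : π (a - iA a₁) = 0 := by
        rw [map_sub, ← h2, hc₁ a₁, ha₁, sub_self]
      refine ⟨⟨a - iA a₁, by rw [LinearMap.mem_ker]; exact hxker⟩, Subtype.ext ?_⟩
      show pA (a - iA a₁) = (z : A'')
      rw [map_sub, h1, hA.apply_apply_eq_zero a₁, sub_zero]
    · rintro ⟨x, rfl⟩
      have hx : π (x : A) = 0 := by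
        have := x.2; rwa [LinearMap.mem_ker] at this
      have h := hkey (f₂ x) (x : A) 0 rfl (by rw [map_zero, hx])
      show dfun (f₂ x) = 0
      rw [h]
      exact (Submodule.Quotient.mk_eq_zero _).mpr (zero_mem _)
  -- exactness at coker π'
  have E4 : f₃'.ker = δ.range := by
    ext c
    simp only [AddMonoidHom.mem_ker, AddMonoidHom.mem_range]
    constructor
    · intro hc
      obtain ⟨b', rfl⟩ := Submodule.Quotient.mk_surjective _ c
      have h0 : Submodule.Quotient.mk (iB b') = (0 : B ⧸ LinearMap.range π) := by
        rw [← hm3 b']; exact hc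
      obtain ⟨a, ha⟩ := (Submodule.Quotient.mk_eq_zero _).mp h0
      have hz'' : π'' (pA a) = 0 := by
        rw [hc₂ a, ha]
        exact hB.apply_apply_eq_zero b'
      refine ⟨⟨pA a, by rw [LinearMap.mem_ker]; exact hz''⟩, ?_⟩
      exact hkey _ a b' rfl ha.symm
    · rintro ⟨z, rfl⟩
      obtain ⟨a, b', h1, h2, h3⟩ := hspec z
      show f₃ (dfun z) = 0
      rw [h3, hm3, h2]
      exact (Submodule.Quotient.mk_eq_zero _).mpr ⟨a, rfl⟩
  -- exactness at coker π
  have E5 : f₄'.ker = f₃'.range := by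
    ext c
    simp only [AddMonoidHom.mem_ker, AddMonoidHom.mem_range]
    constructor
    · intro hc
      obtain ⟨b, rfl⟩ := Submodule.Quotient.mk_surjective _ c
      have h0 : Submodule.Quotient.mk (pB b) = (0 : B'' ⧸ LinearMap.range π'') := by
        rw [← hm4 b]; exact hc
      obtain ⟨a'', ha''⟩ := (Submodule.Quotient.mk_eq_zero _).mp h0
      obtain ⟨a, rfl⟩ := hpA a''
      have hdiff : pB (b - π a) = 0 := by
        rw [map_sub, ← hc₂ a, ha'', sub_self]
      obtain ⟨b', hb'⟩ := (hB (b - π a)).mp hdiff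
      refine ⟨Submodule.Quotient.mk b', ?_⟩
      show f₃ (Submodule.Quotient.mk b') = Submodule.Quotient.mk b
      rw [hm3, Submodule.Quotient.eq]
      refine ⟨-a, ?_⟩
      rw [map_neg, hb']
      abel
    · rintro ⟨c', rfl⟩
      obtain ⟨b', rfl⟩ := Submodule.Quotient.mk_surjective _ c'
      show f₄ (f₃ (Submodule.Quotient.mk b')) = 0
      rw [hm3, hm4, hB.apply_apply_eq_zero b']
      exact (Submodule.Quotient.mk_eq_zero _).mpr (zero_mem _)
  -- surjectivity of f₄
  have hsurj4 : Function.Surjective f₄' := by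
    intro c
    obtain ⟨b'', rfl⟩ := Submodule.Quotient.mk_surjective _ c
    obtain ⟨b, rfl⟩ := hpB b''
    exact ⟨Submodule.Quotient.mk b, hm4 b⟩
  have E6 : f₄'.range = ⊤ := AddMonoidHom.range_eq_top.mpr hsurj4
  -- finiteness
  have hKfin : Finite (LinearMap.ker π') ∧ Finite (B' ⧸ LinearMap.range π') ∧
      Finite (LinearMap.ker π) ∧ Finite (B ⧸ LinearMap.range π) ∧
      Finite (LinearMap.ker π'') ∧ Finite (B'' ⧸ LinearMap.range π'') := by
    rcases htwo with ⟨⟨hK1, hC1⟩, hK2, hC2⟩ | ⟨⟨hK1, hC1⟩, hK3, hC3⟩ | ⟨⟨hK2, hC2⟩, hK3, hC3⟩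
    · haveI := hK1; haveI := hC1; haveI := hK2; haveI := hC2
      have hK3 : Finite (LinearMap.ker π'') := by
        refine KobAux.finite_of_ker_range δ ?_ ?_
        · rw [E3]; exact (Set.finite_range _).to_subtype
        · infer_instance
      have hC3 : Finite (B'' ⧸ LinearMap.range π'') := Finite.of_surjective f₄' hsurj4
      exact ⟨hK1, hC1, hK2, hC2, hK3, hC3⟩
    · haveI := hK1; haveI := hC1; haveI := hK3; haveI := hC3
      have hK2 : Finite (LinearMap.ker π) := by
        refine KobAux.finite_of_ker_range f₂' ?_ ?_
        · rw [E2]; exact (Set.finite_range _).to_subtype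
        · infer_instance
      have hC2 : Finite (B ⧸ LinearMap.range π) := by
        refine KobAux.finite_of_ker_range f₄' ?_ ?_
        · rw [E5]; exact (Set.finite_range _).to_subtype
        · infer_instance
      exact ⟨hK1, hC1, hK2, hC2, hK3, hC3⟩
    · haveI := hK2; haveI := hC2; haveI := hK3; haveI := hC3
      have hK1 : Finite (LinearMap.ker π') := Finite.of_injective f₁' hf₁inj
      have hC1 : Finite (B' ⧸ LinearMap.range π') := by
        refine KobAux.finite_of_ker_range f₃' ?_ ?_
        · rw [E4]; exact (Set.finite_range _).to_subtype
        · infer_instance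
      exact ⟨hK1, hC1, hK2, hC2, hK3, hC3⟩
  obtain ⟨hK1, hC1, hK2, hC2, hK3, hC3⟩ := hKfin
  haveI := hK1; haveI := hC1; haveI := hK2; haveI := hC2; haveI := hK3; haveI := hC3
  -- cards
  obtain ⟨k1, hk1⟩ := KobAux.card_pow_p (p := p) (LinearMap.ker π')
  obtain ⟨k2, hk2⟩ := KobAux.card_pow_p (p := p) (LinearMap.ker π)
  obtain ⟨k3, hk3⟩ := KobAux.card_pow_p (p := p) (LinearMap.ker π'')
  obtain ⟨c1, hc1'⟩ := KobAux.card_pow_p (p := p) (B' ⧸ LinearMap.range π')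
  obtain ⟨c2, hc2'⟩ := KobAux.card_pow_p (p := p) (B ⧸ LinearMap.range π)
  obtain ⟨c3, hc3'⟩ := KobAux.card_pow_p (p := p) (B'' ⧸ LinearMap.range π'')
  -- counting
  have hkerf₁ : f₁'.ker = ⊥ := (AddMonoidHom.ker_eq_bot_iff f₁').mpr hf₁inj
  have q1 : Nat.card (LinearMap.ker π') = Nat.card f₁'.range := by
    rw [KobAux.card_eq_ker_mul_range f₁', hkerf₁, AddSubgroup.card_bot, one_mul]
  have q2 : Nat.card (LinearMap.ker π) = Nat.card f₁'.range * Nat.card f₂'.range := by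
    rw [KobAux.card_eq_ker_mul_range f₂', E2]
  have q3 : Nat.card (LinearMap.ker π'') = Nat.card f₂'.range * Nat.card δ.range := by
    rw [KobAux.card_eq_ker_mul_range δ, E3]
  have q4 : Nat.card (B' ⧸ LinearMap.range π') = Nat.card δ.range * Nat.card f₃'.range := by
    rw [KobAux.card_eq_ker_mul_range f₃', E4]
  have q5 : Nat.card (B ⧸ LinearMap.range π) = Nat.card f₃'.range * Nat.card f₄'.range := by
    rw [KobAux.card_eq_ker_mul_range f₄', E5]
  have q6 : Nat.card (B'' ⧸ LinearMap.range π'') = Nat.card f₄'.range := by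
    rw [E6]
    exact (Nat.card_congr AddSubgroup.topEquiv.toEquiv).symm
  have hprod : p ^ (k1 + k3 + c2) = p ^ (k2 + c1 + c3) := by
    rw [pow_add, pow_add, pow_add, pow_add, ← hk1, ← hk2, ← hk3, ← hc1', ← hc2', ← hc3',
      q1, q2, q3, q4, q5, q6]
    ring
  have harith : k1 + k3 + c2 = k2 + c1 + c3 := Nat.pow_right_injective hp.out.two_le hprod
  have hrank := KobAux.rank_additive iB pB hiB hpB hB
  have l1 := KobAux.moduleLength_toNat (p := p) _ hk1
  have l2 := KobAux.moduleLength_toNat (p := p) _ hk2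
  have l3 := KobAux.moduleLength_toNat (p := p) _ hk3
  have l4 := KobAux.moduleLength_toNat (p := p) _ hc1'
  have l5 := KobAux.moduleLength_toNat (p := p) _ hc2'
  have l6 := KobAux.moduleLength_toNat (p := p) _ hc3'
  refine ⟨⟨hK1, hC1⟩, ⟨hK2, hC2⟩, ⟨hK3, hC3⟩, ?_⟩
  simp only [kobayashiRank, l1, l2, l3, l4, l5, l6, hrank]
  push_cast
  omega
end

section
/- Let p be an odd prime and f ∈ ℤ_p[[X]] a nonzero power series. Write f = p^μ·g where g ∈ ℤ_p[[X]] is not divisible by p, and let λ be the X-adic order of the reduction of g modulo p in 𝔽_p[[X]] (equivalently, by Weierstrass preparation, g = U·P with U a unit of ℤ_p[[X]] and P a distinguished polynomial of degree λ). Then there exists N such that for all n ≥ N, f(ε_n) ≠ 0 and ord_{ε_n}(f(ε_n)) = (p−1)p^{n−1}·μ + λ. -/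
set_option synthInstance.maxHeartbeats 1000000
set_option maxHeartbeats 1000000
set_option linter.unusedSectionVars false
open PowerSeries Finset
namespace OrdEps
variable {p : ℕ} [hp : Fact p.Prime]

noncomputable def tailPS (d : ℕ) (t : PowerSeries ℤ_[p]) : PowerSeries ℤ_[p] :=
  PowerSeries.mk fun i => PowerSeries.coeff (d + i) t

noncomputable def trPS (d : ℕ) (t : PowerSeries ℤ_[p]) : PowerSeries ℤ_[p] :=
  PowerSeries.mk fun i => if i < d then PowerSeries.coeff i t else 0

lemma tr_add_pow_mul_tail (d : ℕ) (t : PowerSeries ℤ_[p]) :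
    t = trPS d t + X ^ d * tailPS d t := by
  ext i
  rw [map_add, coeff_X_pow_mul', trPS, tailPS, coeff_mk, coeff_mk]
  by_cases h : i < d
  · rw [if_pos h, if_neg (by omega), add_zero]
  · rw [if_neg h, if_pos (by omega), zero_add]
    rw [Nat.add_sub_cancel' (Nat.le_of_not_lt h)]

noncomputable def Hs (A : PowerSeries ℤ_[p]) (d : ℕ) (h : PowerSeries ℤ_[p]) :
    ℕ → PowerSeries ℤ_[p]
  | 0 => h
  | m + 1 => -(A * tailPS d (Hs A d h m))

lemma unroll (A : PowerSeries ℤ_[p]) (d : ℕ) (h Q : PowerSeries ℤ_[p])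
    (hQ : Q = X ^ d + PowerSeries.C (p:ℤ_[p]) * A) (m : ℕ) :
    h = (∑ j ∈ range m, (PowerSeries.C (p:ℤ_[p]))^j * trPS d (Hs A d h j))
      + Q * (∑ j ∈ range m, (PowerSeries.C (p:ℤ_[p]))^j * tailPS d (Hs A d h j))
      + (PowerSeries.C (p:ℤ_[p]))^m * Hs A d h m := by
  induction m with
  | zero => simp [Hs]
  | succ m ih =>
    have step : Hs A d h m = trPS d (Hs A d h m) + Q * tailPS d (Hs A d h m)
        + PowerSeries.C (p:ℤ_[p]) * Hs A d h (m+1) := by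
      conv_lhs => rw [tr_add_pow_mul_tail d (Hs A d h m)]
      rw [hQ, show Hs A d h (m+1) = -(A * tailPS d (Hs A d h m)) from rfl]
      ring
    rw [sum_range_succ, sum_range_succ]
    conv_lhs => rw [ih, step]
    ring

lemma p_inv_lt_one : ((p:ℝ))⁻¹ < 1 := by
  rw [inv_lt_one_iff₀]; right; exact_mod_cast hp.out.one_lt

lemma p_inv_nonneg : (0:ℝ) ≤ ((p:ℝ))⁻¹ := by positivity

lemma norm_p_pow_mul (c : ℤ_[p]) (j : ℕ) : ‖(p:ℤ_[p])^j * c‖ ≤ ((p:ℝ)⁻¹)^j := by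
  calc ‖(p:ℤ_[p])^j * c‖ ≤ ‖(p:ℤ_[p])^j‖ * ‖c‖ := norm_mul_le _ _
    _ ≤ ((p:ℝ)⁻¹)^j * 1 := by
        apply mul_le_mul _ c.norm_le_one (norm_nonneg _) (by positivity)
        rw [PadicInt.norm_p_pow]
        rw [zpow_neg, zpow_natCast, inv_pow]
    _ = ((p:ℝ)⁻¹)^j := mul_one _

lemma summable_aux (c : ℕ → ℤ_[p]) : Summable fun j => (p:ℤ_[p])^j * c j := by
  have := summable_geometric_of_lt_one (p_inv_nonneg (p := p)) (p_inv_lt_one (p := p))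
  exact Summable.of_norm_bounded this (fun j => norm_p_pow_mul _ _)

lemma norm_tsum_tail (c : ℕ → ℤ_[p]) (m : ℕ) :
    ‖∑' j, (p:ℤ_[p])^(m+j) * c j‖ ≤ 2 * ((p:ℝ)⁻¹)^m := by
  have hsum : Summable fun j => (p:ℤ_[p])^(m+j) * c j := by
    have := summable_aux (fun j => (p:ℤ_[p])^m * c j)
    refine this.congr fun j => ?_
    rw [pow_add]; ring
  have hns : Summable fun j => ‖(p:ℤ_[p])^(m+j) * c j‖ := by
    refine Summable.of_nonneg_of_le (fun j => norm_nonneg _) (fun j => norm_p_pow_mul _ _) ?_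
    have := summable_geometric_of_lt_one (p_inv_nonneg (p := p)) (p_inv_lt_one (p := p))
    exact (this.mul_left (((p:ℝ)⁻¹)^m)).congr fun j => by rw [← pow_add]
  calc ‖∑' j, (p:ℤ_[p])^(m+j) * c j‖ ≤ ∑' j, ‖(p:ℤ_[p])^(m+j) * c j‖ :=
        norm_tsum_le_tsum_norm hns
    _ ≤ ∑' j : ℕ, ((p:ℝ)⁻¹)^m * ((p:ℝ)⁻¹)^j := by
        refine Summable.tsum_le_tsum (fun j => ?_) hns ?_
        · rw [← pow_add]; exact norm_p_pow_mul _ _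
        · exact (summable_geometric_of_lt_one (p_inv_nonneg (p := p))
            (p_inv_lt_one (p := p))).mul_left _
    _ = ((p:ℝ)⁻¹)^m * (1 - (p:ℝ)⁻¹)⁻¹ := by
        rw [tsum_mul_left, tsum_geometric_of_lt_one (p_inv_nonneg (p := p))
          (p_inv_lt_one (p := p))]
    _ ≤ ((p:ℝ)⁻¹)^m * 2 := by
        have h2 : (p:ℝ)⁻¹ ≤ 2⁻¹ := inv_anti₀ (by norm_num) (by exact_mod_cast hp.out.two_le)
        have h3 : (0:ℝ) < 1 - (p:ℝ)⁻¹ := by linarith [p_inv_lt_one (p := p)]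
        have h4 : (1 - (p:ℝ)⁻¹)⁻¹ ≤ 2 := by
          rw [inv_le_comm₀ h3 (by norm_num)]; norm_num at h2 ⊢; linarith
        exact mul_le_mul_of_nonneg_left h4 (by positivity)
    _ = 2 * ((p:ℝ)⁻¹)^m := mul_comm _ _

lemma eq_zero_of_norm_le (x : ℤ_[p]) (C : ℝ)
    (h : ∀ m : ℕ, ‖x‖ ≤ C * ((p:ℝ)⁻¹)^m) : x = 0 := by
  by_contra hx
  have hx' : 0 < ‖x‖ := norm_pos_iff.mpr hx
  have ht : Filter.Tendsto (fun m : ℕ => C * ((p:ℝ)⁻¹)^m) Filter.atTop (nhds 0) := by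
    simpa using (tendsto_pow_atTop_nhds_zero_of_lt_one (p_inv_nonneg (p := p))
      (p_inv_lt_one (p := p))).const_mul C
  obtain ⟨m, hm⟩ := (ht.eventually (gt_mem_nhds hx')).exists
  exact absurd (h m) (not_le.mpr hm)


lemma partial_sub_tsum (c : ℕ → ℤ_[p]) (m : ℕ) :
    ‖(∑ j ∈ range m, (p:ℤ_[p])^j * c j) - ∑' j, (p:ℤ_[p])^j * c j‖ ≤ 2 * ((p:ℝ)⁻¹)^m := by
  rw [← Summable.sum_add_tsum_nat_add m (summable_aux c), sub_add_cancel_left, norm_neg]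
  have e : (∑' j : ℕ, (p:ℤ_[p])^(j+m) * c (j+m)) = ∑' j : ℕ, (p:ℤ_[p])^(m+j) * c (m+j) :=
    tsum_congr fun j => by rw [add_comm j m]
  rw [e]
  exact norm_tsum_tail (fun t => c (m + t)) m

theorem division (A : PowerSeries ℤ_[p]) (d : ℕ) (Q h : PowerSeries ℤ_[p])
    (hQ : Q = X ^ d + PowerSeries.C (p:ℤ_[p]) * A) :
    ∃ s r : PowerSeries ℤ_[p], (∀ i, d ≤ i → coeff i r = 0) ∧ h = r + Q * s := by
  set H := Hs A d h with hH
  set r : PowerSeries ℤ_[p] := PowerSeries.mk fun i =>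
    if i < d then ∑' j, (p:ℤ_[p])^j * coeff i (H j) else 0 with hr
  set s : PowerSeries ℤ_[p] := PowerSeries.mk fun i =>
    ∑' j, (p:ℤ_[p])^j * coeff (d + i) (H j) with hs
  have coeffC : ∀ (j : ℕ) (u : PowerSeries ℤ_[p]) (i : ℕ),
      coeff i ((PowerSeries.C (p:ℤ_[p]))^j * u) = (p:ℤ_[p])^j * coeff i u := by
    intro j u i
    rw [← map_pow, coeff_C_mul]
  have hTm : ∀ m i, coeff i
      ((∑ j ∈ range m, (PowerSeries.C (p:ℤ_[p]))^j * trPS d (H j)) - r)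
      = (if i < d then (∑ j ∈ range m, (p:ℤ_[p])^j * coeff i (H j))
          - ∑' j, (p:ℤ_[p])^j * coeff i (H j) else 0) := by
    intro m i
    rw [map_sub, map_sum]
    by_cases hid : i < d
    · rw [if_pos hid, hr, coeff_mk, if_pos hid]
      congr 1
      refine Finset.sum_congr rfl fun j _ => ?_
      rw [coeffC, trPS, coeff_mk, if_pos hid]
    · rw [if_neg hid, hr, coeff_mk, if_neg hid, sub_zero]
      refine Finset.sum_eq_zero fun j _ => ?_
      rw [coeffC, trPS, coeff_mk, if_neg hid, mul_zero]
  have hTmbound : ∀ m i, ‖coeff i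
      ((∑ j ∈ range m, (PowerSeries.C (p:ℤ_[p]))^j * trPS d (H j)) - r)‖
      ≤ 2 * ((p:ℝ)⁻¹)^m := by
    intro m i
    rw [hTm]
    split_ifs with hid
    · exact partial_sub_tsum _ m
    · simp only [norm_zero]; positivity
  have hSm : ∀ m b, coeff b
      ((∑ j ∈ range m, (PowerSeries.C (p:ℤ_[p]))^j * tailPS d (H j)) - s)
      = (∑ j ∈ range m, (p:ℤ_[p])^j * coeff (d + b) (H j))
        - ∑' j, (p:ℤ_[p])^j * coeff (d + b) (H j) := by
    intro m b
    rw [map_sub, map_sum, hs, coeff_mk]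
    congr 1
    refine Finset.sum_congr rfl fun j _ => ?_
    rw [coeffC, tailPS, coeff_mk]
  have key : ∀ i, coeff i (h - r - Q * s) = 0 := by
    intro i
    apply eq_zero_of_norm_le _ (2 + (i+1) * 2 + 1)
    intro m
    have hid : h - r - Q * s
        = ((∑ j ∈ range m, (PowerSeries.C (p:ℤ_[p]))^j * trPS d (H j)) - r)
          + Q * ((∑ j ∈ range m, (PowerSeries.C (p:ℤ_[p]))^j * tailPS d (H j)) - s)
          + (PowerSeries.C (p:ℤ_[p]))^m * H m := by
      conv_lhs => rw [unroll A d h Q hQ m]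
      rw [hH]
      ring
    rw [hid, map_add, map_add]
    have b3 : ‖coeff i ((PowerSeries.C (p:ℤ_[p]))^m * H m)‖ ≤ ((p:ℝ)⁻¹)^m := by
      rw [coeffC]; exact norm_p_pow_mul _ _
    have b2 : ‖coeff i
        (Q * ((∑ j ∈ range m, (PowerSeries.C (p:ℤ_[p]))^j * tailPS d (H j)) - s))‖
        ≤ (i+1) * (2 * ((p:ℝ)⁻¹)^m) := by
      rw [coeff_mul]
      calc ‖∑ x ∈ antidiagonal i, coeff x.1 Q * coeff x.2 _‖
          ≤ ∑ x ∈ antidiagonal i, ‖coeff x.1 Q * coeff x.2 _‖ :=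
            norm_sum_le _ _
        _ ≤ ∑ _x ∈ antidiagonal i, 2 * ((p:ℝ)⁻¹)^m := by
            refine Finset.sum_le_sum fun x _ => ?_
            calc ‖coeff x.1 Q * coeff x.2 _‖
                ≤ ‖coeff x.1 Q‖ * ‖coeff x.2 _‖ := norm_mul_le _ _
              _ ≤ 1 * (2 * ((p:ℝ)⁻¹)^m) := by
                  refine mul_le_mul (PadicInt.norm_le_one _) ?_ (norm_nonneg _) zero_le_one
                  rw [hSm]
                  exact partial_sub_tsum _ m
              _ = 2 * ((p:ℝ)⁻¹)^m := one_mul _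
        _ = (i+1) * (2 * ((p:ℝ)⁻¹)^m) := by
            rw [Finset.sum_const, Finset.Nat.card_antidiagonal, nsmul_eq_mul]
            push_cast; ring
    refine le_trans (norm_add_le _ _) ?_
    refine le_trans (add_le_add (norm_add_le _ _) le_rfl) ?_
    refine le_trans (add_le_add (add_le_add (hTmbound m i) b2) b3) (le_of_eq (by ring))
  refine ⟨s, r, ?_, ?_⟩
  · intro i hi
    rw [hr, coeff_mk, if_neg (by omega)]
  · have : h - r - Q * s = 0 := by
      ext i
      rw [key, map_zero]
    have := sub_eq_zero.mp (by rw [sub_sub] at this; exact this)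
    exact this

section Field
variable {K : Type*} [Field K] (v : K → ℚ)
  (hv_mul : ∀ x y : K, x ≠ 0 → y ≠ 0 → v (x * y) = v x + v y)
  (hv_add : ∀ x y : K, x ≠ 0 → y ≠ 0 → x + y ≠ 0 → min (v x) (v y) ≤ v (x + y))

include hv_mul

lemma v_one : v 1 = 0 := by
  have := hv_mul 1 1 one_ne_zero one_ne_zero
  rw [mul_one] at this; linarith

lemma v_pow (x : K) (hx : x ≠ 0) (m : ℕ) : v (x ^ m) = m * v x := by
  induction m with
  | zero => simpa using v_one v hv_mul
  | succ m ih =>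
    rw [pow_succ, hv_mul _ _ (pow_ne_zero _ hx) hx, ih]
    push_cast; ring

lemma v_neg (x : K) (hx : x ≠ 0) : v (-x) = v x := by
  have hm1 : v (-1 : K) = 0 := by
    have h := hv_mul (-1 : K) (-1) (by norm_num) (by norm_num)
    rw [neg_mul_neg, one_mul, v_one v hv_mul] at h
    linarith
  have h := hv_mul (-1 : K) x (by norm_num) hx
  rw [neg_one_mul] at h
  rw [h, hm1, zero_add]

include hv_add

lemma v_add_strict (a b : K) (ha : a ≠ 0) (hb : b = 0 ∨ (b ≠ 0 ∧ v a < v b)) :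
    a + b ≠ 0 ∧ v (a + b) = v a := by
  rcases hb with rfl | ⟨hb, hab⟩
  · rw [add_zero]; exact ⟨ha, rfl⟩
  have hne : a + b ≠ 0 := by
    intro h
    have hba : b = -a := by linear_combination h
    rw [hba, v_neg v hv_mul a ha] at hab
    exact lt_irrefl _ hab
  refine ⟨hne, ?_⟩
  have h1 : min (v a) (v b) ≤ v (a + b) := hv_add _ _ ha hb hne
  rw [min_eq_left hab.le] at h1
  have h2 : min (v (a + b)) (v (-b)) ≤ v a := by
    have h := hv_add (a + b) (-b) hne (neg_ne_zero.mpr hb) (by rwa [add_neg_cancel_right])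
    rwa [add_neg_cancel_right] at h
  rw [v_neg v hv_mul b hb] at h2
  rcases le_total (v (a + b)) (v b) with h | h
  · rw [min_eq_left h] at h2; linarith
  · rw [min_eq_right h] at h2; linarith

lemma v_sum_ge {ι : Type*} (s : Finset ι) (f : ι → K) (c : ℚ)
    (hf : ∀ i ∈ s, f i = 0 ∨ (f i ≠ 0 ∧ c ≤ v (f i))) :
    (∑ i ∈ s, f i) = 0 ∨ ((∑ i ∈ s, f i) ≠ 0 ∧ c ≤ v (∑ i ∈ s, f i)) := by
  classical
  induction s using Finset.cons_induction with
  | empty => simp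
  | cons a s ha ih =>
    rw [Finset.sum_cons]
    have hrest := ih fun i hi => hf i (Finset.mem_cons.mpr (Or.inr hi))
    have hha := hf a (Finset.mem_cons_self a s)
    rcases hha with h0 | ⟨hne, hva⟩
    · rw [h0, zero_add]; exact hrest
    rcases hrest with h0 | ⟨hne2, hv2⟩
    · rw [h0, add_zero]; exact Or.inr ⟨hne, hva⟩
    by_cases hz : f a + ∑ i ∈ s, f i = 0
    · exact Or.inl hz
    refine Or.inr ⟨hz, ?_⟩
    have := hv_add _ _ hne hne2 hz
    rcases le_total (v (f a)) (v (∑ i ∈ s, f i)) with h | h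
    · rw [min_eq_left h] at this; linarith
    · rw [min_eq_right h] at this; linarith

lemma v_or_add (a b : K) (c : ℚ) (hA : a = 0 ∨ (a ≠ 0 ∧ c ≤ v a))
    (hB : b = 0 ∨ (b ≠ 0 ∧ c ≤ v b)) :
    a + b = 0 ∨ (a + b ≠ 0 ∧ c ≤ v (a + b)) := by
  rcases hA with rfl | ⟨ha, hva⟩
  · rw [zero_add]; exact hB
  rcases hB with rfl | ⟨hb, hvb⟩
  · rw [add_zero]; exact Or.inr ⟨ha, hva⟩
  by_cases hz : a + b = 0
  · exact Or.inl hz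
  refine Or.inr ⟨hz, ?_⟩
  have := hv_add a b ha hb hz
  rcases le_total (v a) (v b) with h | h
  · rw [min_eq_left h] at this; linarith
  · rw [min_eq_right h] at this; linarith

lemma v_prod {ι : Type*} (s : Finset ι) (f : ι → K) (hf : ∀ i ∈ s, f i ≠ 0) :
    v (∏ i ∈ s, f i) = ∑ i ∈ s, v (f i) := by
  classical
  induction s using Finset.cons_induction with
  | empty => simpa using v_one v hv_mul
  | cons a s ha ih =>
    rw [Finset.prod_cons, Finset.sum_cons,
      hv_mul _ _ (hf a (Finset.mem_cons_self a s))
        (Finset.prod_ne_zero_iff.mpr fun i hi => hf i (Finset.mem_cons.mpr (Or.inr hi))),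
      ih fun i hi => hf i (Finset.mem_cons.mpr (Or.inr hi))]


lemma v_root_zero (m : ℕ) (hm : 0 < m) {ξ : K} (hξ : IsPrimitiveRoot ξ m) : v ξ = 0 := by
  have hξ0 : ξ ≠ 0 := hξ.ne_zero (by omega)
  have h := v_pow v hv_mul ξ hξ0 m
  rw [hξ.pow_eq_one, v_one v hv_mul] at h
  have hm' : (m:ℚ) ≠ 0 := by positivity
  field_simp at h
  exact (mul_eq_zero.mp h.symm).resolve_left hm'

include hv_add

lemma v_pow_sub_one {m : ℕ} (hm : 1 < m) {ξ : K} (hξ : IsPrimitiveRoot ξ m)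
    {k : ℕ} (hk : 0 < k) (hk' : k < m) :
    ξ ^ k - 1 ≠ 0 ∧ v (ξ - 1) ≤ v (ξ ^ k - 1) := by
  have hξ0 : ξ ≠ 0 := hξ.ne_zero (by omega)
  have hξ1 : ξ ≠ 1 := hξ.ne_one hm
  have hgm : (∑ i ∈ range k, ξ ^ i) * (ξ - 1) = ξ ^ k - 1 := geom_sum_mul ξ k
  have hne : ξ ^ k - 1 ≠ 0 := by
    refine sub_ne_zero.mpr fun h => ?_
    have := (hξ.pow_eq_one_iff_dvd k).mp h
    exact absurd (Nat.le_of_dvd hk this) (by omega)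
  have hsne : (∑ i ∈ range k, ξ ^ i) ≠ 0 := by
    intro h; rw [h, zero_mul] at hgm; exact hne hgm.symm
  have hvξ : v ξ = 0 := v_root_zero v hv_mul hv_add m (by omega) hξ
  have hsv : 0 ≤ v (∑ i ∈ range k, ξ ^ i) := by
    rcases v_sum_ge v hv_mul hv_add (range k) (fun i => ξ ^ i) 0
        (fun i _ => Or.inr ⟨pow_ne_zero _ hξ0, by rw [v_pow v hv_mul _ hξ0, hvξ, mul_zero]⟩)
      with h | ⟨_, h⟩
    · exact absurd h hsne
    · exact h
  refine ⟨hne, ?_⟩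
  have h := hv_mul _ _ hsne (sub_ne_zero.mpr hξ1)
  rw [hgm] at h
  rw [h]; linarith

lemma v_eps {p : ℕ} [hp : Fact p.Prime] (n : ℕ) (hn : 1 ≤ n) {ζ : K} (hζ : IsPrimitiveRoot ζ (p ^ n))
    (hvp : v ((p : K)) = 1) :
    ζ - 1 ≠ 0 ∧ ((p ^ n).totient : ℚ) * v (ζ - 1) = 1 := by
  have hppos : 0 < p := hp.out.pos
  have hm : 1 < p ^ n := Nat.one_lt_pow (by omega) hp.out.one_lt
  have hmpos : 0 < p ^ n := by omega
  haveI : NeZero (p ^ n) := ⟨by omega⟩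
  have heps : ζ - 1 ≠ 0 := sub_ne_zero.mpr (hζ.ne_one hm)
  refine ⟨heps, ?_⟩
  have veq : ∀ η ∈ primitiveRoots (p ^ n) K, v (1 - η) = v (ζ - 1) := by
    intro η hη'
    have hη : IsPrimitiveRoot η (p ^ n) := (mem_primitiveRoots hmpos).mp hη'
    obtain ⟨i, hi, hpow⟩ := hζ.eq_pow_of_pow_eq_one hη.pow_eq_one
    obtain ⟨j, hj, hpow2⟩ := hη.eq_pow_of_pow_eq_one hζ.pow_eq_one
    have hi0 : 0 < i := by
      rcases Nat.eq_zero_or_pos i with rfl | h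
      · rw [pow_zero] at hpow; exact absurd hpow.symm (hη.ne_one hm)
      · exact h
    have hj0 : 0 < j := by
      rcases Nat.eq_zero_or_pos j with rfl | h
      · rw [pow_zero] at hpow2; exact absurd hpow2.symm (hζ.ne_one hm)
      · exact h
    have h1 := v_pow_sub_one v hv_mul hv_add hm hζ hi0 hi
    have h2 := v_pow_sub_one v hv_mul hv_add hm hη hj0 hj
    rw [hpow] at h1
    rw [hpow2] at h2
    have hrw : v (1 - η) = v (η - 1) := by
      rw [show (1 - η) = -(η - 1) by ring, v_neg v hv_mul _ h1.1]
    rw [hrw]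
    linarith [h1.2, h2.2]
  have hprod : (∏ η ∈ primitiveRoots (p ^ n) K, (1 - η)) = ((p : K)) := by
    have hc := Polynomial.cyclotomic_eq_prod_X_sub_primitiveRoots hζ
    have he : Polynomial.eval 1 (Polynomial.cyclotomic (p ^ n) K) = (p : K) := by
      conv_lhs => rw [show n = (n - 1) + 1 by omega]
      exact Polynomial.eval_one_cyclotomic_prime_pow _
    rw [hc, Polynomial.eval_prod] at he
    rw [← he]
    exact Finset.prod_congr rfl fun η _ => by simp
  have hnz : ∀ η ∈ primitiveRoots (p ^ n) K, (1 : K) - η ≠ 0 := by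
    intro η hη'
    have hη : IsPrimitiveRoot η (p ^ n) := (mem_primitiveRoots hmpos).mp hη'
    exact fun h => (hη.ne_one hm) (by linear_combination -h)
  have hv := v_prod v hv_mul hv_add (primitiveRoots (p ^ n) K) (fun η => 1 - η) hnz
  rw [hprod, hvp, Finset.sum_congr rfl veq, Finset.sum_const, nsmul_eq_mul,
    hζ.card_primitiveRoots] at hv
  exact hv.symm

end Field

section Main
open PowerSeries Finset
variable {p : ℕ} [hp : Fact p.Prime]

lemma trPS_eq_sum (d : ℕ) (t : PowerSeries ℤ_[p]) :
    trPS d t = ∑ i ∈ range d, PowerSeries.C (coeff i t) * X ^ i := by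
  ext k
  rw [map_sum, trPS, coeff_mk]
  have : ∀ i ∈ range d, coeff k (PowerSeries.C (coeff i t) * X ^ i)
      = if k = i then coeff i t else 0 := fun i _ => coeff_C_mul_X_pow _ _ _
  rw [Finset.sum_congr rfl this, Finset.sum_ite_eq]
  simp only [Finset.mem_range]

lemma Q_eq (n : ℕ) :
    ∃ A : PowerSeries ℤ_[p], ((X + 1 : PowerSeries ℤ_[p]) ^ (p ^ n) - 1)
      = X ^ (p ^ n) + PowerSeries.C (p : ℤ_[p]) * A := by
  set d := p ^ n with hd
  have hd0 : 0 < d := pow_pos hp.out.pos n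
  refine ⟨PowerSeries.mk fun k =>
    if 0 < k ∧ k < d then ((d.choose k / p : ℕ) : ℤ_[p]) else 0, ?_⟩
  have hcoe : ((((Polynomial.X + 1 : Polynomial ℤ_[p]) ^ d : Polynomial ℤ_[p]))
      : PowerSeries ℤ_[p]) = (X + 1 : PowerSeries ℤ_[p]) ^ d := by
    rw [Polynomial.coe_pow, Polynomial.coe_add, Polynomial.coe_X, Polynomial.coe_one]
  have hco : ∀ k, coeff k ((X + 1 : PowerSeries ℤ_[p]) ^ d) = (d.choose k : ℤ_[p]) := by
    intro k
    rw [← hcoe, Polynomial.coeff_coe, Polynomial.coeff_X_add_one_pow]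
  ext k
  rw [map_sub, hco, map_add, coeff_X_pow, coeff_C_mul, coeff_mk]
  rcases Nat.lt_trichotomy k d with hk | rfl | hk
  · rcases Nat.eq_zero_or_pos k with rfl | hk0
    · rw [if_neg (by omega), if_neg (by simp), Nat.choose_zero_right]
      simp
    · rw [if_neg (by omega), if_pos ⟨hk0, hk⟩, PowerSeries.coeff_one, if_neg (by omega)]
      have hdvd : p ∣ d.choose k := hp.out.dvd_choose_pow (by omega) (by omega)
      rw [sub_zero, zero_add, ← Nat.cast_mul, Nat.mul_div_cancel' hdvd]
  · rw [if_pos rfl, if_neg (by omega), PowerSeries.coeff_one, if_neg (by omega),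
      Nat.choose_self, mul_zero, add_zero, sub_zero, Nat.cast_one]
  · rw [if_neg (by omega), if_neg (by omega), PowerSeries.coeff_one, if_neg (by omega),
      Nat.choose_eq_zero_of_lt hk, mul_zero, add_zero, sub_zero, Nat.cast_zero]

variable {K : Type*} [Field K] [Algebra ℚ_[p] K] (v : K → ℚ)
  (hv_mul : ∀ x y : K, x ≠ 0 → y ≠ 0 → v (x * y) = v x + v y)
  (hv_add : ∀ x y : K, x ≠ 0 → y ≠ 0 → x + y ≠ 0 → min (v x) (v y) ≤ v (x + y))
  (hv_ext : ∀ x : ℚ_[p], x ≠ 0 → v (algebraMap ℚ_[p] K x) = (x.valuation : ℚ))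

include hv_mul hv_add hv_ext

lemma eval_nonneg (φn : PowerSeries ℤ_[p] →+* K) (ζn : K) (n : ℕ) (hn : 1 ≤ n)
    (hζn : IsPrimitiveRoot ζn (p ^ n))
    (hC : ∀ a : ℤ_[p], φn (PowerSeries.C a) = algebraMap ℚ_[p] K (a : ℚ_[p]))
    (hX : φn PowerSeries.X = ζn - 1)
    (hvε : 0 ≤ v (ζn - 1)) (hε : ζn - 1 ≠ 0) :
    ∀ h : PowerSeries ℤ_[p], φn h ≠ 0 → 0 ≤ v (φn h) := by
  intro h hh
  obtain ⟨A, hQ⟩ := Q_eq (p := p) n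
  obtain ⟨s, r, hrc, hdiv⟩ := division A (p ^ n) _ h hQ
  have hφQ : φn ((X + 1 : PowerSeries ℤ_[p]) ^ (p ^ n) - 1) = 0 := by
    rw [map_sub, map_pow, map_add, hX, map_one]
    rw [show ζn - 1 + 1 = ζn by ring, hζn.pow_eq_one, sub_self]
  have hφh : φn h = φn r := by
    rw [hdiv, map_add, map_mul, hφQ, zero_mul, add_zero]
  have hrtr : r = trPS (p ^ n) r := by
    ext k
    rw [trPS, coeff_mk]
    by_cases hk : k < p ^ n
    · rw [if_pos hk]
    · rw [if_neg hk, hrc k (by omega)]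
  have hsum : φn r = ∑ i ∈ range (p ^ n),
      algebraMap ℚ_[p] K ((coeff i r : ℤ_[p]) : ℚ_[p]) * (ζn - 1) ^ i := by
    conv_lhs => rw [hrtr, trPS_eq_sum]
    rw [map_sum]
    exact Finset.sum_congr rfl fun i _ => by rw [map_mul, map_pow, hC, hX]
  rw [hφh] at hh ⊢
  rw [hsum] at hh ⊢
  have hbr : ∀ i ∈ range (p ^ n),
      (algebraMap ℚ_[p] K ((coeff i r : ℤ_[p]) : ℚ_[p]) * (ζn - 1) ^ i = 0 ∨
        (algebraMap ℚ_[p] K ((coeff i r : ℤ_[p]) : ℚ_[p]) * (ζn - 1) ^ i ≠ 0 ∧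
          (0:ℚ) ≤ v (algebraMap ℚ_[p] K ((coeff i r : ℤ_[p]) : ℚ_[p]) * (ζn - 1) ^ i))) := by
    intro i _
    by_cases hz : coeff i r = 0
    · left; rw [hz]; simp
    · right
      have hq0 : ((coeff i r : ℤ_[p]) : ℚ_[p]) ≠ 0 := by
        simpa [PadicInt.coe_eq_zero] using hz
      have ha : algebraMap ℚ_[p] K ((coeff i r : ℤ_[p]) : ℚ_[p]) ≠ 0 :=
        fun hc => hq0 ((algebraMap ℚ_[p] K).injective (by rw [hc, map_zero]))
      have hεp : (ζn - 1) ^ i ≠ 0 := pow_ne_zero _ hε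
      refine ⟨mul_ne_zero ha hεp, ?_⟩
      rw [hv_mul _ _ ha hεp, hv_ext _ hq0, v_pow v hv_mul _ hε]
      have h1 : (0:ℚ) ≤ ((coeff i r : ℤ_[p]) : ℚ_[p]).valuation := by
        exact_mod_cast PadicInt.valuation_coe_nonneg (x := coeff i r)
      have h2 : (0:ℚ) ≤ (i : ℚ) * v (ζn - 1) := by positivity
      linarith
  rcases v_sum_ge v hv_mul hv_add (range (p ^ n)) _ 0 hbr with h0 | ⟨_, h0⟩
  · exact absurd h0 hh
  · exact h0

end Main

end OrdEps

/-- For a nonzero `f = p^μ·g ∈ ℤ_p[[X]]` with `p ∤ g` and `λ` the `X`-adic order of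
`g mod p`, one has `ord_{ε_n}(f(ε_n)) = (p−1)p^{n−1}·μ + λ` for all `n ≫ 0`. -/
theorem ord_eval_at_eps_eventually {p : ℕ} [Fact p.Prime] (hp : Odd p)
    -- a field containing all `ℚ_p(ζ_{p^n})`
    {K : Type*} [Field K] [Algebra ℚ_[p] K]
    (ζ : ℕ → K) (hζ : ∀ n, 1 ≤ n → IsPrimitiveRoot (ζ n) (p ^ n))
    -- the (unique) valuation on `K` extending the `p`-adic valuation of `ℚ_p`
    (v : K → ℚ)
    (hv_mul : ∀ x y : K, x ≠ 0 → y ≠ 0 → v (x * y) = v x + v y)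
    (hv_add : ∀ x y : K, x ≠ 0 → y ≠ 0 → x + y ≠ 0 → min (v x) (v y) ≤ v (x + y))
    (hv_ext : ∀ x : ℚ_[p], x ≠ 0 → v (algebraMap ℚ_[p] K x) = (x.valuation : ℚ))
    -- evaluation of power series at `ε_n = ζ_{p^n} − 1`
    (φ : ℕ → (PowerSeries ℤ_[p] →+* K))
    (hφC : ∀ n, 1 ≤ n → ∀ a : ℤ_[p],
      φ n (PowerSeries.C a) = algebraMap ℚ_[p] K (a : ℚ_[p]))
    (hφX : ∀ n, 1 ≤ n → φ n PowerSeries.X = ζ n - 1)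
    -- `f = p^μ·g` with `p ∤ g`, and `λ` the `X`-adic order of `g` mod `p`
    (f g : PowerSeries ℤ_[p]) (hf0 : f ≠ 0) (μ lam : ℕ)
    (hfg : f = (PowerSeries.C (p : ℤ_[p])) ^ μ * g)
    (hpg : ¬ (PowerSeries.C (p : ℤ_[p])) ∣ g)
    (hlam : (PowerSeries.map (PadicInt.toZMod) g).order = (lam : ℕ∞)) :
    ∃ N : ℕ, ∀ n, N ≤ n → φ n f ≠ 0 ∧
      ((p - 1) * p ^ (n - 1) : ℚ) * v (φ n f)
        = ((p - 1) * p ^ (n - 1) : ℚ) * μ + lam := by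
  classical
  refine ⟨lam + 1, fun n hn => ?_⟩
  have hn1 : 1 ≤ n := by omega
  have hprime : p.Prime := Fact.out
  have hp3 : 3 ≤ p := by
    rcases hp with ⟨k, hk⟩
    have := hprime.two_le
    omega
  set t := (p ^ n).totient with ht
  have htv : t = p ^ (n - 1) * (p - 1) := Nat.totient_prime_pow hprime (by omega)
  have hlt : lam < t := by
    have h1 : n < 2 ^ n := Nat.lt_two_pow_self
    have h2 : 2 ^ (n - 1) ≤ p ^ (n - 1) := Nat.pow_le_pow_left (by omega) _
    have h3 : 2 ^ n = 2 ^ (n - 1) * 2 := by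
      rw [← pow_succ]
      congr 1
      omega
    have h4 : 2 ^ n ≤ t := by
      rw [htv, h3]
      exact Nat.mul_le_mul h2 (by omega)
    omega
  have hζn := hζ n hn1
  set ε := ζ n - 1 with hεdef
  have hpq0 : ((p : ℚ_[p])) ≠ 0 := Nat.cast_ne_zero.mpr hprime.ne_zero
  have hvalgp : v (algebraMap ℚ_[p] K ((p : ℚ_[p]))) = 1 := by
    rw [hv_ext _ hpq0, Padic.valuation_p]
    norm_num
  have hvpK : v ((p : K)) = 1 := by
    rw [← map_natCast (algebraMap ℚ_[p] K) p]
    exact hvalgp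
  obtain ⟨hε0, hεv⟩ := OrdEps.v_eps v hv_mul hv_add n hn1 hζn hvpK
  replace hεv : (t : ℚ) * v ε = 1 := hεv
  have htq : (0:ℚ) < (t:ℚ) := by
    have : 0 < t := by omega
    exact_mod_cast this
  have hvεpos : 0 < v ε := by
    nlinarith [hεv]
  have hlamvε : (lam : ℚ) * v ε < 1 := by
    have h1 : (lam : ℚ) < (t : ℚ) := by exact_mod_cast hlt
    nlinarith [hεv, hvεpos]
  -- coefficient facts
  have horder := PowerSeries.order_eq_nat.mp hlam
  have hglam0 : PowerSeries.coeff lam g ≠ 0 := by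
    intro h
    exact horder.1 (by rw [PowerSeries.coeff_map, h, map_zero])
  have hglamd : ¬ ((p : ℤ_[p]) ∣ PowerSeries.coeff lam g) := by
    intro hd
    refine horder.1 ?_
    rw [PowerSeries.coeff_map]
    have hmem : PowerSeries.coeff lam g ∈ RingHom.ker (PadicInt.toZMod (p := p)) := by
      rw [PadicInt.ker_toZMod, PadicInt.maximalIdeal_eq_span_p, Ideal.mem_span_singleton]
      exact hd
    exact hmem
  have hdvd : ∀ i, i < lam → (p : ℤ_[p]) ∣ PowerSeries.coeff i g := by
    intro i hi
    have h0 : PadicInt.toZMod (PowerSeries.coeff i g) = 0 := by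
      have := horder.2 i hi
      rwa [PowerSeries.coeff_map] at this
    have hmem : PowerSeries.coeff i g ∈ RingHom.ker (PadicInt.toZMod (p := p)) := h0
    rwa [PadicInt.ker_toZMod, PadicInt.maximalIdeal_eq_span_p,
      Ideal.mem_span_singleton] at hmem
  -- the leading coefficient is a unit, with v = 0
  have hglamq0 : ((PowerSeries.coeff lam g : ℤ_[p]) : ℚ_[p]) ≠ 0 :=
    PadicInt.coe_ne_zero.mpr hglam0
  have hvglam : v (algebraMap ℚ_[p] K ((PowerSeries.coeff lam g : ℤ_[p]) : ℚ_[p])) = 0 := by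
    have hnorm : ‖PowerSeries.coeff lam g‖ = 1 := by
      refine le_antisymm (PadicInt.norm_le_one _) ?_
      by_contra hlt1
      exact hglamd ((PadicInt.norm_lt_one_iff_dvd _).mp (by linarith [lt_of_not_ge hlt1]))
    obtain ⟨u, hu⟩ := PadicInt.isUnit_iff.mpr hnorm
    have haw : (PowerSeries.coeff lam g) * (↑u⁻¹ : ℤ_[p]) = 1 := by
      rw [← hu]
      exact u.mul_inv
    have hw0 : ((↑u⁻¹ : ℤ_[p]) : ℚ_[p]) ≠ 0 :=
      PadicInt.coe_ne_zero.mpr u⁻¹.ne_zero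
    have hmulK : algebraMap ℚ_[p] K ((PowerSeries.coeff lam g : ℤ_[p]) : ℚ_[p])
        * algebraMap ℚ_[p] K ((↑u⁻¹ : ℤ_[p]) : ℚ_[p]) = 1 := by
      rw [← map_mul]
      have : ((PowerSeries.coeff lam g : ℤ_[p]) : ℚ_[p]) * ((↑u⁻¹ : ℤ_[p]) : ℚ_[p])
          = 1 := by
        rw [← PadicInt.coe_mul, haw, PadicInt.coe_one]
      rw [this, map_one]
    have ha : algebraMap ℚ_[p] K ((PowerSeries.coeff lam g : ℤ_[p]) : ℚ_[p]) ≠ 0 :=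
      fun hc => hglamq0 ((algebraMap ℚ_[p] K).injective (by rw [hc, map_zero]))
    have hb : algebraMap ℚ_[p] K ((↑u⁻¹ : ℤ_[p]) : ℚ_[p]) ≠ 0 :=
      fun hc => hw0 ((algebraMap ℚ_[p] K).injective (by rw [hc, map_zero]))
    have hsum0 := hv_mul _ _ ha hb
    rw [hmulK, OrdEps.v_one v hv_mul] at hsum0
    have hva := hv_ext _ hglamq0
    have hvb := hv_ext _ hw0
    have hnn1 : (0:ℚ) ≤ (((PowerSeries.coeff lam g : ℤ_[p]) : ℚ_[p]).valuation : ℚ) := by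
      exact_mod_cast PadicInt.valuation_coe_nonneg (x := PowerSeries.coeff lam g)
    have hnn2 : (0:ℚ) ≤ (((↑u⁻¹ : ℤ_[p]) : ℚ_[p]).valuation : ℚ) := by
      exact_mod_cast PadicInt.valuation_coe_nonneg (x := (↑u⁻¹ : ℤ_[p]))
    linarith
  -- decomposition of φ n g
  have hφg : φ n g = (∑ i ∈ Finset.range (lam + 1),
      algebraMap ℚ_[p] K ((PowerSeries.coeff i g : ℤ_[p]) : ℚ_[p]) * ε ^ i)
      + ε ^ (lam + 1) * φ n (OrdEps.tailPS (lam + 1) g) := by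
    conv_lhs => rw [OrdEps.tr_add_pow_mul_tail (lam + 1) g]
    rw [map_add, map_mul, map_pow, hφX n hn1, OrdEps.trPS_eq_sum, map_sum, ← hεdef]
    congr 1
    exact Finset.sum_congr rfl fun i _ => by
      rw [map_mul, map_pow, hφC n hn1, hφX n hn1, ← hεdef]
  rw [Finset.sum_range_succ] at hφg
  set c : ℚ := min 1 ((lam + 1 : ℚ) * v ε) with hc
  have hcgt : (lam : ℚ) * v ε < c := by
    rw [hc]
    rcases min_cases (1:ℚ) ((lam + 1 : ℚ) * v ε) with ⟨h1, _⟩ | ⟨h1, _⟩ <;> rw [h1] <;> nlinarith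
  set main := algebraMap ℚ_[p] K ((PowerSeries.coeff lam g : ℤ_[p]) : ℚ_[p]) * ε ^ lam
    with hmain
  have hmain0 : main ≠ 0 := by
    refine mul_ne_zero ?_ (pow_ne_zero _ hε0)
    exact fun hc0 => hglamq0 ((algebraMap ℚ_[p] K).injective (by rw [hc0, map_zero]))
  have hvmain : v main = (lam : ℚ) * v ε := by
    rw [hmain, hv_mul _ _
      (fun hc0 => hglamq0 ((algebraMap ℚ_[p] K).injective (by rw [hc0, map_zero])))
      (pow_ne_zero _ hε0), hvglam, OrdEps.v_pow v hv_mul _ hε0, zero_add]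
  -- small terms
  have hrest1 : (∑ i ∈ Finset.range lam,
      algebraMap ℚ_[p] K ((PowerSeries.coeff i g : ℤ_[p]) : ℚ_[p]) * ε ^ i) = 0 ∨
      ((∑ i ∈ Finset.range lam,
      algebraMap ℚ_[p] K ((PowerSeries.coeff i g : ℤ_[p]) : ℚ_[p]) * ε ^ i) ≠ 0 ∧
      c ≤ v (∑ i ∈ Finset.range lam,
      algebraMap ℚ_[p] K ((PowerSeries.coeff i g : ℤ_[p]) : ℚ_[p]) * ε ^ i)) := by
    refine OrdEps.v_sum_ge v hv_mul hv_add _ _ c fun i hi => ?_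
    rw [Finset.mem_range] at hi
    by_cases hz : PowerSeries.coeff i g = 0
    · left
      rw [hz]
      simp
    · right
      obtain ⟨b, hb⟩ := hdvd i hi
      have hb0 : b ≠ 0 := fun h => hz (by rw [hb, h, mul_zero])
      have hq0 : ((PowerSeries.coeff i g : ℤ_[p]) : ℚ_[p]) ≠ 0 :=
        PadicInt.coe_ne_zero.mpr hz
      have ha : algebraMap ℚ_[p] K ((PowerSeries.coeff i g : ℤ_[p]) : ℚ_[p]) ≠ 0 :=
        fun hc0 => hq0 ((algebraMap ℚ_[p] K).injective (by rw [hc0, map_zero]))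
      have hεp : ε ^ i ≠ 0 := pow_ne_zero _ hε0
      refine ⟨mul_ne_zero ha hεp, ?_⟩
      rw [hv_mul _ _ ha hεp, hv_ext _ hq0, OrdEps.v_pow v hv_mul _ hε0]
      have hval : (1:ℚ) ≤ (((PowerSeries.coeff i g : ℤ_[p]) : ℚ_[p]).valuation : ℚ) := by
        have hbq0 : ((b : ℤ_[p]) : ℚ_[p]) ≠ 0 := PadicInt.coe_ne_zero.mpr hb0
        have hcast : ((PowerSeries.coeff i g : ℤ_[p]) : ℚ_[p])
            = (p : ℚ_[p]) * ((b : ℤ_[p]) : ℚ_[p]) := by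
          rw [hb]
          push_cast
          ring
        rw [hcast, Padic.valuation_mul hpq0 hbq0, Padic.valuation_p]
        have : (0:ℚ) ≤ (((b : ℤ_[p]) : ℚ_[p]).valuation : ℚ) := by
          exact_mod_cast PadicInt.valuation_coe_nonneg (x := b)
        push_cast
        linarith
      have h2 : (0:ℚ) ≤ (i : ℚ) * v ε := by positivity
      have hcle : c ≤ 1 := min_le_left _ _
      linarith
  have hrest2 : (ε ^ (lam + 1) * φ n (OrdEps.tailPS (lam + 1) g)) = 0 ∨
      ((ε ^ (lam + 1) * φ n (OrdEps.tailPS (lam + 1) g)) ≠ 0 ∧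
        c ≤ v (ε ^ (lam + 1) * φ n (OrdEps.tailPS (lam + 1) g))) := by
    by_cases hz : φ n (OrdEps.tailPS (lam + 1) g) = 0
    · left
      rw [hz, mul_zero]
    · right
      have hεp : ε ^ (lam + 1) ≠ 0 := pow_ne_zero _ hε0
      have hnn := OrdEps.eval_nonneg v hv_mul hv_add hv_ext (φ n) (ζ n) n hn1 hζn
        (hφC n hn1) (hφX n hn1) hvεpos.le hε0 _ hz
      refine ⟨mul_ne_zero hεp hz, ?_⟩
      rw [hv_mul _ _ hεp hz, OrdEps.v_pow v hv_mul _ hε0]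
      have hcle : c ≤ (lam + 1 : ℚ) * v ε := min_le_right _ _
      push_cast
      linarith
  have hrest := OrdEps.v_or_add v hv_mul hv_add _ _ c hrest1 hrest2
  have hφg' : φ n g = main + ((∑ i ∈ Finset.range lam,
      algebraMap ℚ_[p] K ((PowerSeries.coeff i g : ℤ_[p]) : ℚ_[p]) * ε ^ i)
      + ε ^ (lam + 1) * φ n (OrdEps.tailPS (lam + 1) g)) := by
    rw [hφg, hmain]
    ring
  have hkey := OrdEps.v_add_strict v hv_mul hv_add main _ hmain0 (by
    rcases hrest with h0 | ⟨hne, hge⟩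
    · exact Or.inl h0
    · exact Or.inr ⟨hne, by rw [hvmain]; linarith⟩)
  rw [← hφg'] at hkey
  obtain ⟨hφgne, hvφg⟩ := hkey
  rw [hvmain] at hvφg
  -- now f
  have hCp : φ n (PowerSeries.C (p : ℤ_[p])) = algebraMap ℚ_[p] K ((p : ℚ_[p])) := by
    rw [hφC n hn1, PadicInt.coe_natCast]
  have halgp0 : algebraMap ℚ_[p] K ((p : ℚ_[p])) ≠ 0 :=
    fun hc0 => hpq0 ((algebraMap ℚ_[p] K).injective (by rw [hc0, map_zero]))
  have hφf : φ n f = (algebraMap ℚ_[p] K ((p : ℚ_[p]))) ^ μ * φ n g := by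
    rw [hfg, map_mul, map_pow, hCp]
  have hφfne : φ n f ≠ 0 := by
    rw [hφf]
    exact mul_ne_zero (pow_ne_zero _ halgp0) hφgne
  have hvφf : v (φ n f) = (μ : ℚ) + (lam : ℚ) * v ε := by
    rw [hφf, hv_mul _ _ (pow_ne_zero _ halgp0) hφgne,
      OrdEps.v_pow v hv_mul _ halgp0, hvalgp, hvφg, mul_one]
  refine ⟨hφfne, ?_⟩
  have hQc : ((p : ℚ) - 1) * (p : ℚ) ^ (n - 1) = (t : ℚ) := by
    rw [htv]
    push_cast [Nat.cast_sub hprime.one_le]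
    ring
  rw [hvφf, hQc]
  linear_combination (lam : ℚ) * hεv + ((t:ℚ) * (μ:ℚ) + (t:ℚ) * (lam:ℚ) * v ε) * (1 : ℚ) - ((t:ℚ)*(μ:ℚ) + (t:ℚ)*(lam:ℚ)*v ε)
end

section
/- Let p be an odd prime, a ∈ p·ℤ_p, u ∈ ℤ_p^× and n ≥ 1. With C_i := [[a, 1], [−Φ_i, 0]] ∈ M_2(ℤ_p[X]) and H_n := C_n·C_{n−1}···C_1, write (H_n^♯, H_n^♭) for the first row of H_n. Then for every F ∈ Λ = ℤ_p[[X]] there exist G₁, G₂ ∈ Λ whose constant terms satisfy (p−1)·G₁(0) = (2−a)·G₂(0), such that H_n^♯·G₁ + u·H_n^♭·G₂ ≡ ω_{n−1}·F (mod ω_n·Λ). In other words, writing I := {(G₁,G₂) ∈ Λ⊕Λ : (p−1)G₁(0) = (2−a)G₂(0)} and h : I → Λ/(ω_n), (G₁,G₂) ↦ H_n^♯G₁ + uH_n^♭G₂ mod ω_n, the image of h contains ω_{n−1}·(Λ/(ω_n)). -/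
/-- `ω_m = (1+X)^{p^m} − 1` in `Λ = ℤ_p[[X]]`. -/
noncomputable def omegaPS (p : ℕ) [Fact p.Prime] (m : ℕ) : PowerSeries ℤ_[p] :=
  (1 + PowerSeries.X) ^ (p ^ m) - 1

/-- The image of `h : I → Λ/(ω_n)`, `(G₁,G₂) ↦ H_n^♯G₁ + uH_n^♭G₂`, contains
`ω_{n−1}·(Λ/(ω_n))`. -/
theorem image_h_contains_omega {p : ℕ} [Fact p.Prime] (hp : Odd p)
    (a : ℤ_[p]) (ha : (p : ℤ_[p]) ∣ a) (u : ℤ_[p]ˣ) (n : ℕ) (hn : 1 ≤ n)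
    -- `Φ_m = ω_m/ω_{m−1}` for `m ≥ 1`
    (Phi : ℕ → PowerSeries ℤ_[p])
    (hPhi : ∀ m, 1 ≤ m → omegaPS p (m - 1) * Phi m = omegaPS p m)
    -- `C_i = [[a, 1], [−Φ_i, 0]]` and `H_0 = 1`, `H_m = C_m·H_{m−1}`
    (C : ℕ → Matrix (Fin 2) (Fin 2) (PowerSeries ℤ_[p]))
    (hC : ∀ i, C i = !![PowerSeries.C a, 1; -(Phi i), 0])
    (H : ℕ → Matrix (Fin 2) (Fin 2) (PowerSeries ℤ_[p]))
    (hH0 : H 0 = 1) (hH : ∀ m, H (m + 1) = C (m + 1) * H m) :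
    ∀ F : PowerSeries ℤ_[p], ∃ G₁ G₂ : PowerSeries ℤ_[p],
      ((p : ℤ_[p]) - 1) * PowerSeries.constantCoeff G₁
        = (2 - a) * PowerSeries.constantCoeff G₂ ∧
      omegaPS p n ∣ (H n 0 0 * G₁ + PowerSeries.C (u : ℤ_[p]) * (H n 0 1) * G₂
        - omegaPS p (n - 1) * F) := by
  obtain ⟨m, rfl⟩ : ∃ m, n = m + 1 := ⟨n - 1, (Nat.succ_pred_eq_of_pos hn).symm⟩
  intro F
  -- X · det (H k) = ω_k
  have hdet : ∀ k, PowerSeries.X * (H k).det = omegaPS p k := by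
    intro k
    induction k with
    | zero =>
      rw [hH0, Matrix.det_one, mul_one]
      simp [omegaPS]
    | succ k ih =>
      rw [hH, Matrix.det_mul, hC, Matrix.det_fin_two_of]
      have := hPhi (k + 1) (by omega)
      simp only [Nat.add_sub_cancel] at this
      rw [← this, ← ih]
      ring
  -- entries of the first row of H (m+1)
  have e00 : H (m + 1) 0 0 = PowerSeries.C a * H m 0 0 + H m 1 0 := by
    rw [hH, hC]
    simp [Matrix.mul_apply, Fin.sum_univ_two]
  have e01 : H (m + 1) 0 1 = PowerSeries.C a * H m 0 1 + H m 1 1 := by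
    rw [hH, hC]
    simp [Matrix.mul_apply, Fin.sum_univ_two]
  -- the key Wronskian identity
  have key : PowerSeries.X * (H (m + 1) 0 0 * H m 0 1 - H (m + 1) 0 1 * H m 0 0)
      = -omegaPS p m := by
    have hd := hdet m
    rw [Matrix.det_fin_two] at hd
    rw [e00, e01]
    linear_combination -hd
  have hu : PowerSeries.C (u : ℤ_[p]) * PowerSeries.C ((u⁻¹ : ℤ_[p]ˣ) : ℤ_[p])
      = 1 := by
    rw [← map_mul]
    simp
  refine ⟨-(PowerSeries.X * H m 0 1 * F),
    PowerSeries.C ((u⁻¹ : ℤ_[p]ˣ) : ℤ_[p]) * (PowerSeries.X * H m 0 0 * F), ?_, ?_⟩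
  · simp
  · simp only [Nat.add_sub_cancel]
    have : H (m + 1) 0 0 * -(PowerSeries.X * H m 0 1 * F)
        + PowerSeries.C (u : ℤ_[p]) * H (m + 1) 0 1
          * (PowerSeries.C ((u⁻¹ : ℤ_[p]ˣ) : ℤ_[p]) * (PowerSeries.X * H m 0 0 * F))
        - omegaPS p m * F = 0 := by
      linear_combination (-F) * key + (H (m + 1) 0 1 * (PowerSeries.X * H m 0 0 * F)) * hu
    rw [this]
    exact dvd_zero _
end

section
/- Let p be an odd prime, n ≥ 1, and a ∈ ℤ_p with v_p(a) = 1. With C_i := [[a, 1], [−Φ_i, 0]] ∈ M_2(ℤ_p[X]) and H_n := C_n·C_{n−1}···C_1, write (H_n^♯, H_n^♭) for the first row of H_n, and evaluate all entries at ε_n = ζ_{p^n} − 1. Then both entries of the second row of H_n(ε_n) are zero, and: if n is odd, v_p(H_n^♯(ε_n)) = 1 + Σ_{i=1}^{(n−1)/2} p^{−2i} and v_p(H_n^♭(ε_n)) = Σ_{i=1}^{(n−1)/2} p^{−(2i−1)}; if n is even, v_p(H_n^♯(ε_n)) = Σ_{i=1}^{n/2} p^{−(2i−1)} and v_p(H_n^♭(ε_n))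 = 1 + Σ_{i=1}^{n/2−1} p^{−2i}. -/
section VAux
variable {K : Type*} [Field K] (v : K → ℚ)

theorem v_one' (hv_mul : ∀ x y : K, x ≠ 0 → y ≠ 0 → v (x * y) = v x + v y) : v 1 = 0 := by
  have h := hv_mul 1 1 one_ne_zero one_ne_zero
  rw [mul_one] at h; linarith

theorem v_neg' (hv_mul : ∀ x y : K, x ≠ 0 → y ≠ 0 → v (x * y) = v x + v y)
    (x : K) (hx : x ≠ 0) : v (-x) = v x := by
  have hm1 : v (-1 : K) = 0 := by
    have h := hv_mul (-1) (-1) (by norm_num) (by norm_num)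
    rw [neg_mul_neg, one_mul, v_one' v hv_mul] at h; linarith
  have h := hv_mul (-1) x (by norm_num) hx
  rw [neg_one_mul] at h; rw [h, hm1, zero_add]

theorem v_pow' (hv_mul : ∀ x y : K, x ≠ 0 → y ≠ 0 → v (x * y) = v x + v y)
    (x : K) (hx : x ≠ 0) (m : ℕ) : v (x ^ m) = m * v x := by
  induction m with
  | zero => simpa using v_one' v hv_mul
  | succ k ih =>
    rw [pow_succ, hv_mul _ _ (pow_ne_zero _ hx) hx, ih]; push_cast; ring

theorem v_add_eq_left' (hv_mul : ∀ x y : K, x ≠ 0 → y ≠ 0 → v (x * y) = v x + v y)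
    (hv_add : ∀ x y : K, x ≠ 0 → y ≠ 0 → x + y ≠ 0 → min (v x) (v y) ≤ v (x + y))
    (x y : K) (hx : x ≠ 0) (hy : y ≠ 0) (h : v x < v y) :
    x + y ≠ 0 ∧ v (x + y) = v x := by
  have hne : x + y ≠ 0 := by
    intro h0
    have hxy : x = -y := eq_neg_of_add_eq_zero_left h0
    rw [hxy, v_neg' v hv_mul y hy] at h
    exact lt_irrefl _ h
  refine ⟨hne, le_antisymm ?_ ?_⟩
  · by_contra hlt
    push_neg at hlt
    have h2 := hv_add (x + y) (-y) hne (neg_ne_zero.2 hy)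
      (by rwa [add_neg_cancel_right])
    rw [add_neg_cancel_right, v_neg' v hv_mul y hy] at h2
    have := lt_min hlt h
    exact absurd h2 (by push_neg; exact this)
  · have h2 := hv_add x y hx hy hne
    rwa [min_eq_left h.le] at h2

theorem v_sum_ge' (hv_add : ∀ x y : K, x ≠ 0 → y ≠ 0 → x + y ≠ 0 → min (v x) (v y) ≤ v (x + y))
    {ι : Type*} (c : ℚ) (s : Finset ι) (f : ι → K)
    (hne : ∀ i ∈ s, f i ≠ 0) (hc : ∀ i ∈ s, c ≤ v (f i)) (hs : (∑ i ∈ s, f i) ≠ 0) :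
    c ≤ v (∑ i ∈ s, f i) := by
  classical
  induction s using Finset.induction_on with
  | empty => simp at hs
  | insert _ _ hnm ih =>
    rename_i b t
    rw [Finset.sum_insert hnm] at hs ⊢
    by_cases h0 : (∑ i ∈ t, f i) = 0
    · rw [h0, add_zero]
      exact hc b (Finset.mem_insert_self _ _)
    · have h1 := ih (fun i hi => hne i (Finset.mem_insert_of_mem hi))
        (fun i hi => hc i (Finset.mem_insert_of_mem hi)) h0
      have h2 := hv_add (f b) _ (hne b (Finset.mem_insert_self _ _)) h0 hs
      exact le_trans (le_min (hc b (Finset.mem_insert_self _ _)) h1) h2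

theorem v_prod' (hv_mul : ∀ x y : K, x ≠ 0 → y ≠ 0 → v (x * y) = v x + v y)
    {ι : Type*} (s : Finset ι) (f : ι → K) (h : ∀ i ∈ s, f i ≠ 0) :
    v (∏ i ∈ s, f i) = ∑ i ∈ s, v (f i) := by
  classical
  induction s using Finset.induction_on with
  | empty => simpa using v_one' v hv_mul
  | insert _ _ hnm ih =>
    rename_i b t
    rw [Finset.prod_insert hnm, Finset.sum_insert hnm,
      hv_mul _ _ (h b (Finset.mem_insert_self _ _))
        (Finset.prod_ne_zero_iff.2 fun i hi => h i (Finset.mem_insert_of_mem hi)),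
      ih (fun i hi => h i (Finset.mem_insert_of_mem hi))]

theorem v_rou' (hv_mul : ∀ x y : K, x ≠ 0 → y ≠ 0 → v (x * y) = v x + v y)
    (ξ : K) (N : ℕ) (hN : 0 < N) (h : ξ ^ N = 1) : v ξ = 0 := by
  have hξ0 : ξ ≠ 0 := fun h0 => by simp [h0, zero_pow hN.ne'] at h
  have := v_pow' v hv_mul ξ hξ0 N
  rw [h, v_one' v hv_mul] at this
  have hN' : (N : ℚ) ≠ 0 := Nat.cast_ne_zero.2 hN.ne'
  field_simp at this
  exact (mul_eq_zero.1 this.symm).resolve_left hN'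

theorem v_pow_sub_one_ge' (hv_mul : ∀ x y : K, x ≠ 0 → y ≠ 0 → v (x * y) = v x + v y)
    (hv_add : ∀ x y : K, x ≠ 0 → y ≠ 0 → x + y ≠ 0 → min (v x) (v y) ≤ v (x + y))
    (ξ : K) (N t : ℕ) (hN : 0 < N) (hξN : ξ ^ N = 1) (hξ1 : ξ ≠ 1) (ht : ξ ^ t ≠ 1) :
    v (ξ - 1) ≤ v (ξ ^ t - 1) := by
  have hξ0 : ξ ≠ 0 := fun h0 => by simp [h0, zero_pow hN.ne'] at hξN
  have hv0 : v ξ = 0 := v_rou' v hv_mul ξ N hN hξN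
  have hgeom : (∑ i ∈ Finset.range t, ξ ^ i) * (ξ - 1) = ξ ^ t - 1 := geom_sum_mul ξ t
  have hS : (∑ i ∈ Finset.range t, ξ ^ i) ≠ 0 := by
    intro h0
    rw [h0, zero_mul] at hgeom
    exact ht (by rw [← sub_eq_zero, ← hgeom])
  have hvS : 0 ≤ v (∑ i ∈ Finset.range t, ξ ^ i) :=
    v_sum_ge' v hv_add 0 _ _ (fun i _ => pow_ne_zero _ hξ0)
      (fun i _ => le_of_eq (by rw [v_pow' v hv_mul ξ hξ0, hv0, mul_zero])) hS
  rw [← hgeom, hv_mul _ _ hS (sub_ne_zero.2 hξ1)]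
  linarith

theorem v_prim_sub_one_eq' (hv_mul : ∀ x y : K, x ≠ 0 → y ≠ 0 → v (x * y) = v x + v y)
    (hv_add : ∀ x y : K, x ≠ 0 → y ≠ 0 → x + y ≠ 0 → min (v x) (v y) ≤ v (x + y))
    (N : ℕ) (hN : 1 < N) (ξ μ : K) (hξ : IsPrimitiveRoot ξ N) (hμ : IsPrimitiveRoot μ N) :
    v (μ - 1) = v (ξ - 1) := by
  have : NeZero N := ⟨by omega⟩
  obtain ⟨i, -, hi⟩ := hξ.eq_pow_of_pow_eq_one hμ.pow_eq_one
  obtain ⟨j, -, hj⟩ := hμ.eq_pow_of_pow_eq_one hξ.pow_eq_one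
  have h1 : v (ξ - 1) ≤ v (μ - 1) := by
    rw [← hi]
    exact v_pow_sub_one_ge' v hv_mul hv_add ξ N i (by omega) hξ.pow_eq_one
      (hξ.ne_one hN) (by rw [hi]; exact hμ.ne_one hN)
  have h2 : v (μ - 1) ≤ v (ξ - 1) := by
    rw [← hj]
    exact v_pow_sub_one_ge' v hv_mul hv_add μ N j (by omega) hμ.pow_eq_one
      (hμ.ne_one hN) (by rw [hj]; exact hξ.ne_one hN)
  linarith

theorem v_prim_value' (hv_mul : ∀ x y : K, x ≠ 0 → y ≠ 0 → v (x * y) = v x + v y)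
    (hv_add : ∀ x y : K, x ≠ 0 → y ≠ 0 → x + y ≠ 0 → min (v x) (v y) ≤ v (x + y))
    {p : ℕ} [Fact p.Prime] (hvp : v ((p : K)) = 1) (k : ℕ) (hk : 1 ≤ k)
    (ξ : K) (hξ : IsPrimitiveRoot ξ (p ^ k)) :
    v (ξ - 1) = ((Nat.totient (p ^ k) : ℚ))⁻¹ := by
  have hpp : p.Prime := Fact.out
  have hpk1 : 1 < p ^ k := Nat.one_lt_pow (by omega) hpp.one_lt
  have hcy := Polynomial.cyclotomic_eq_prod_X_sub_primitiveRoots hξ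
  have heval := Polynomial.eval_one_cyclotomic_prime_pow (R := K) (p := p) (k - 1)
  rw [show k - 1 + 1 = k by omega, hcy, Polynomial.eval_prod] at heval
  simp only [Polynomial.eval_sub, Polynomial.eval_X, Polynomial.eval_C] at heval
  have hfac : ∀ μ ∈ primitiveRoots (p ^ k) K, (1 - μ) ≠ 0 := by
    intro μ hμ
    have h := (mem_primitiveRoots (by omega)).1 hμ
    exact fun h0 => (h.ne_one hpk1) (sub_eq_zero.1 h0).symm
  have hval : ∀ μ ∈ primitiveRoots (p ^ k) K, v (1 - μ) = v (ξ - 1) := by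
    intro μ hμ
    have h := (mem_primitiveRoots (by omega)).1 hμ
    rw [show (1 : K) - μ = -(μ - 1) by ring, v_neg' v hv_mul _ (sub_ne_zero.2 (h.ne_one hpk1)),
      v_prim_sub_one_eq' v hv_mul hv_add (p ^ k) hpk1 ξ μ hξ h]
  have hv2 : v ((p : K)) = ∑ μ ∈ primitiveRoots (p ^ k) K, v (1 - μ) := by
    rw [← heval]; exact v_prod' v hv_mul _ _ hfac
  rw [Finset.sum_congr rfl hval, Finset.sum_const, hξ.card_primitiveRoots,
    nsmul_eq_mul, hvp] at hv2
  have htot : (0 : ℚ) < (Nat.totient (p ^ k) : ℚ) := by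
    exact_mod_cast Nat.totient_pos.2 (by omega)
  field_simp
  linarith [hv2]

end VAux
noncomputable def valA (q : ℚ) (n m : ℕ) : ℚ :=
  (if m % 2 = 1 then 1 else 0) + ∑ j ∈ Finset.Icc 1 (m / 2), q ^ (n - 2*j + 1)

noncomputable def valB (q : ℚ) (n m : ℕ) : ℚ :=
  (if m % 2 = 0 then 1 else 0) + ∑ j ∈ Finset.Icc 1 ((m - 1) / 2), q ^ (n - 2*j)

theorem valA_odd (q : ℚ) (n m : ℕ) (hm : m % 2 = 1) :
    valA q n m = 1 + valA q n (m - 1) := by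
  simp only [valA]
  rw [if_pos hm, if_neg (by omega : ¬(m-1) % 2 = 1), show (m-1)/2 = m/2 by omega]
  ring

theorem valA_even (q : ℚ) (n m : ℕ) (h2 : 2 ≤ m) (hm : m % 2 = 0) :
    valA q n m = q ^ (n - m + 1) + valA q n (m - 2) := by
  simp only [valA]
  rw [if_neg (by omega : ¬m % 2 = 1), if_neg (by omega : ¬(m-2) % 2 = 1),
    show m/2 = (m-2)/2 + 1 by omega, Finset.sum_Icc_succ_top (by omega : 1 ≤ (m-2)/2 + 1),
    show n - 2*((m-2)/2 + 1) + 1 = n - m + 1 by omega]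
  ring

theorem valB_even (q : ℚ) (n m : ℕ) (h2 : 2 ≤ m) (hm : m % 2 = 0) :
    valB q n m = 1 + valB q n (m - 1) := by
  simp only [valB]
  rw [if_pos hm, if_neg (by omega : ¬(m-1) % 2 = 0), show (m-1-1)/2 = (m-1)/2 by omega]
  ring

theorem valB_odd (q : ℚ) (n m : ℕ) (h3 : 3 ≤ m) (hmn : m ≤ n) (hm : m % 2 = 1) :
    valB q n m = q ^ (n - m + 1) + valB q n (m - 2) := by
  simp only [valB]
  rw [if_neg (by omega : ¬m % 2 = 0), if_neg (by omega : ¬(m-2) % 2 = 0),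
    show (m-1)/2 = (m-2-1)/2 + 1 by omega,
    Finset.sum_Icc_succ_top (by omega : 1 ≤ (m-2-1)/2 + 1),
    show n - 2*((m-2-1)/2 + 1) = n - m + 1 by omega]
  ring

theorem sum_Icc_flip (N : ℕ) (f g : ℕ → ℚ) (hfg : ∀ j, 1 ≤ j → j ≤ N → f j = g (N + 1 - j)) :
    ∑ j ∈ Finset.Icc 1 N, f j = ∑ i ∈ Finset.Icc 1 N, g i := by
  refine Finset.sum_nbij' (fun j => N + 1 - j) (fun j => N + 1 - j) ?_ ?_ ?_ ?_ ?_
  · intro a ha; simp only [Finset.mem_Icc] at *; omega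
  · intro a ha; simp only [Finset.mem_Icc] at *; omega
  · intro a ha; simp only [Finset.mem_Icc] at *; omega
  · intro a ha; simp only [Finset.mem_Icc] at *; omega
  · intro a ha; simp only [Finset.mem_Icc] at ha; exact hfg a ha.1 ha.2

theorem tot_inv_sub {p : ℕ} (hp : p.Prime) (k : ℕ) (hk : 1 ≤ k) :
    ((p ^ k).totient : ℚ)⁻¹ - ((p ^ (k+1)).totient : ℚ)⁻¹ = ((p : ℚ)⁻¹) ^ k := by
  obtain ⟨j, rfl⟩ : ∃ j, k = j + 1 := ⟨k - 1, by omega⟩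
  rw [Nat.totient_prime_pow hp (by omega : 0 < j + 1),
    Nat.totient_prime_pow hp (by omega : 0 < j + 1 + 1)]
  have hP : (0:ℚ) < p := by exact_mod_cast hp.pos
  have hP1 : (1:ℚ) < p := by exact_mod_cast hp.one_lt
  have h1 : ((p:ℚ)) ≠ 0 := by linarith
  have h2 : ((p:ℚ)) - 1 ≠ 0 := by linarith
  push_cast [Nat.cast_sub hp.one_lt.le]
  field_simp
  rw [one_div, inv_pow, mul_assoc _ ((p:ℚ) ^ (j + 1)), mul_inv_cancel₀ (pow_ne_zero _ h1)]
  ring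


/-- `ω_m = (1+X)^{p^m} − 1` in `ℤ_p[X]`. -/
noncomputable def omegaPoly (p : ℕ) [Fact p.Prime] (m : ℕ) : Polynomial ℤ_[p] :=
  (1 + Polynomial.X) ^ (p ^ m) - 1

/-- Valuations of the entries of `H_n(ε_n)` when `v_p(a) = 1`. -/
theorem H_matrix_valuation_at_eps {p : ℕ} [Fact p.Prime] (hp : Odd p)
    (n : ℕ) (hn : 1 ≤ n)
    (a : ℤ_[p]) (ha : a.valuation = 1)
    -- a field containing `ℚ_p(ζ_{p^n})`
    {K : Type*} [Field K] [Algebra ℚ_[p] K]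
    (ζ : K) (hζ : IsPrimitiveRoot ζ (p ^ n))
    -- the (unique) valuation on `K` extending the `p`-adic valuation of `ℚ_p`
    (v : K → ℚ)
    (hv_mul : ∀ x y : K, x ≠ 0 → y ≠ 0 → v (x * y) = v x + v y)
    (hv_add : ∀ x y : K, x ≠ 0 → y ≠ 0 → x + y ≠ 0 → min (v x) (v y) ≤ v (x + y))
    (hv_ext : ∀ x : ℚ_[p], x ≠ 0 → v (algebraMap ℚ_[p] K x) = (x.valuation : ℚ))
    -- evaluation of polynomials at `ε_n = ζ − 1`
    (ev : Polynomial ℤ_[p] → K)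
    (hev : ∀ q : Polynomial ℤ_[p],
      ev q = Polynomial.eval₂ ((algebraMap ℚ_[p] K).comp (PadicInt.Coe.ringHom)) (ζ - 1) q)
    -- `Φ_m = ω_m/ω_{m−1}` for `m ≥ 1`
    (Phi : ℕ → Polynomial ℤ_[p])
    (hPhi : ∀ m, 1 ≤ m → omegaPoly p (m - 1) * Phi m = omegaPoly p m)
    -- `C_i = [[a, 1], [−Φ_i, 0]]` and `H_0 = 1`, `H_m = C_m·H_{m−1}`
    (C : ℕ → Matrix (Fin 2) (Fin 2) (Polynomial ℤ_[p]))
    (hC : ∀ i, C i = !![Polynomial.C a, 1; -(Phi i), 0])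
    (H : ℕ → Matrix (Fin 2) (Fin 2) (Polynomial ℤ_[p]))
    (hH0 : H 0 = 1) (hH : ∀ m, H (m + 1) = C (m + 1) * H m) :
    -- the second row of `H_n(ε_n)` vanishes
    ev (H n 1 0) = 0 ∧ ev (H n 1 1) = 0 ∧
    -- odd case
    (n % 2 = 1 →
      v (ev (H n 0 0)) = 1 + ∑ i ∈ Finset.Icc 1 ((n - 1) / 2), ((p : ℚ) ^ (2 * i))⁻¹ ∧
      v (ev (H n 0 1)) = ∑ i ∈ Finset.Icc 1 ((n - 1) / 2), ((p : ℚ) ^ (2 * i - 1))⁻¹) ∧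
    -- even case
    (n % 2 = 0 →
      v (ev (H n 0 0)) = ∑ i ∈ Finset.Icc 1 (n / 2), ((p : ℚ) ^ (2 * i - 1))⁻¹ ∧
      v (ev (H n 0 1)) = 1 + ∑ i ∈ Finset.Icc 1 (n / 2 - 1), ((p : ℚ) ^ (2 * i))⁻¹) := by
  classical
  have hpp : p.Prime := Fact.out
  have hp2 : 2 ≤ p := hpp.two_le
  have hp1Q : (1:ℚ) < p := by exact_mod_cast hpp.one_lt
  set q : ℚ := (p : ℚ)⁻¹ with hqdef
  have hq0 : 0 < q := inv_pos.2 (by linarith)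
  have hq1 : q < 1 := by
    rw [hqdef]
    exact inv_lt_one_of_one_lt₀ hp1Q
  have hqlt : ∀ s t : ℕ, s < t → q ^ t < q ^ s := fun s t h =>
    pow_lt_pow_right_of_lt_one₀ hq0 hq1 h
  have hqle1 : ∀ s : ℕ, q ^ s ≤ 1 := fun s => pow_le_one₀ hq0.le hq1.le
  -- the evaluation ring hom
  set ρ : ℤ_[p] →+* K := (algebraMap ℚ_[p] K).comp (PadicInt.Coe.ringHom) with hρdef
  set Ev : Polynomial ℤ_[p] →+* K := Polynomial.eval₂RingHom ρ (ζ - 1) with hEvdef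
  have hev' : ∀ g : Polynomial ℤ_[p], ev g = Ev g := by
    intro g
    rw [hev g, hEvdef]
    rfl
  have hEvX : Ev Polynomial.X = ζ - 1 := by
    rw [hEvdef]
    simp
  -- facts about ζ
  have hpn1 : 1 < p ^ n := Nat.one_lt_pow (by omega) (by omega)
  have hζN : ζ ^ (p ^ n) = 1 := hζ.pow_eq_one
  have hζ1 : ζ ≠ 1 := hζ.ne_one hpn1
  -- evaluation of ω
  have hω : ∀ j : ℕ, Ev (omegaPoly p j) = ζ ^ (p ^ j) - 1 := by
    intro j
    have h1 : (1:K) + (ζ - 1) = ζ := by ring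
    simp only [omegaPoly, map_sub, map_pow, map_add, map_one, hEvX, h1]
  have hprim : ∀ j, j < n → IsPrimitiveRoot (ζ ^ (p ^ j)) (p ^ (n - j)) := by
    intro j hj
    exact hζ.pow (by positivity) (by rw [← pow_add]; congr 1; omega)
  have hωne : ∀ j, j < n → Ev (omegaPoly p j) ≠ 0 := by
    intro j hj
    rw [hω]
    exact sub_ne_zero.2 ((hprim j hj).ne_one (Nat.one_lt_pow (by omega) (by omega)))
  have hvp : v ((p : K)) = 1 := by
    have h1 : ((p:ℚ_[p])) ≠ 0 := Nat.cast_ne_zero.2 hpp.ne_zero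
    have h2 := hv_ext (p:ℚ_[p]) h1
    rw [map_natCast] at h2
    rw [h2, Padic.valuation_p]
    norm_num
  have hωv : ∀ j, j < n → v (Ev (omegaPoly p j)) = ((p ^ (n - j)).totient : ℚ)⁻¹ := by
    intro j hj
    rw [hω]
    exact v_prim_value' v hv_mul hv_add hvp (n - j) (by omega) _ (hprim j hj)
  -- facts about Φ
  have hΦmul : ∀ i, 1 ≤ i → Ev (omegaPoly p (i-1)) * Ev (Phi i) = Ev (omegaPoly p i) := by
    intro i hi
    rw [← map_mul, hPhi i hi]
  have hΦn0 : Ev (Phi n) = 0 := by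
    have h := hΦmul n hn
    have h0 : Ev (omegaPoly p n) = 0 := by rw [hω, hζN, sub_self]
    rw [h0] at h
    rcases mul_eq_zero.1 h with h' | h'
    · exact absurd h' (hωne (n-1) (by omega))
    · exact h'
  have hΦne : ∀ i, 1 ≤ i → i < n → Ev (Phi i) ≠ 0 := by
    intro i h1 h2 h0
    exact hωne i h2 (by rw [← hΦmul i h1, h0, mul_zero])
  have hΦv : ∀ i, 1 ≤ i → i < n → v (Ev (Phi i)) = q ^ (n - i) := by
    intro i h1 h2
    have h := hv_mul _ _ (hωne (i-1) (by omega)) (hΦne i h1 h2)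
    rw [hΦmul i h1, hωv i h2, hωv (i-1) (by omega)] at h
    have harith := tot_inv_sub hpp (n - i) (by omega)
    rw [show n - (i-1) = (n-i) + 1 by omega] at h
    rw [hqdef]
    linarith
  -- facts about a
  have ha0 : a ≠ 0 := by
    intro h0
    rw [h0, PadicInt.valuation_zero] at ha
    exact absurd ha (by norm_num)
  have haQ : ((a : ℚ_[p])) ≠ 0 := PadicInt.coe_ne_zero.2 ha0
  have hcoeK : Ev (Polynomial.C a) = algebraMap ℚ_[p] K ((a : ℚ_[p])) := by
    rw [hEvdef]
    simp only [Polynomial.coe_eval₂RingHom, Polynomial.eval₂_C]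
    rfl
  have hαne : Ev (Polynomial.C a) ≠ 0 := by
    rw [hcoeK]
    exact fun h0 => haQ ((map_eq_zero (algebraMap ℚ_[p] K)).1 h0)
  have hαv : v (Ev (Polynomial.C a)) = 1 := by
    rw [hcoeK]
    rw [hv_ext _ haQ]
    have hcoe : (↑a : ℚ_[p]).valuation = a.valuation := PadicInt.valuation_coe a
    rw [hcoe, ha]
    norm_num
  -- matrix entry recurrences
  have hrow1 : ∀ (m : ℕ) (j : Fin 2), H (m+1) 0 j = Polynomial.C a * H m 0 j + H m 1 j := by
    intro m j
    rw [hH m, hC (m+1), Matrix.mul_apply, Fin.sum_univ_two]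
    simp
  have hrow2 : ∀ (m : ℕ) (j : Fin 2), H (m+1) 1 j = -(Phi (m+1)) * H m 0 j := by
    intro m j
    rw [hH m, hC (m+1), Matrix.mul_apply, Fin.sum_univ_two]
    simp
  have hxrec : ∀ (m : ℕ) (j : Fin 2),
      Ev (H (m+2) 0 j) = Ev (Polynomial.C a) * Ev (H (m+1) 0 j)
        + -(Ev (Phi (m+1)) * Ev (H m 0 j)) := by
    intro m j
    rw [show m + 2 = (m+1)+1 from rfl, hrow1 (m+1) j, hrow2 m j]
    simp only [map_add, map_mul, map_neg, neg_mul]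
  have hH1 : H 1 = C 1 := by rw [show (1:ℕ) = 0 + 1 from rfl, hH 0, hH0, mul_one]
  have hH100 : H 1 0 0 = Polynomial.C a := by rw [hH1, hC 1]; simp
  have hH101 : H 1 0 1 = 1 := by rw [hH1, hC 1]; simp
  have hH000 : H 0 0 0 = 1 := by rw [hH0]; simp
  have hH001 : H 0 0 1 = 0 := by rw [hH0]; simp [Matrix.one_apply]
  -- the key induction
  have key : ∀ m, 1 ≤ m → m ≤ n →
      ((Ev (H m 0 0) ≠ 0 ∧ v (Ev (H m 0 0)) = valA q n m) ∧
       (Ev (H m 0 1) ≠ 0 ∧ v (Ev (H m 0 1)) = valB q n m)) := by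
    intro m
    induction m using Nat.strong_induction_on with
    | _ m IH =>
      rcases m with _ | _ | _ | k
      · omega
      · -- m = 1
        intro _ _
        have hA1 : valA q n 1 = 1 := by
          simp only [valA]
          rw [show (1:ℕ)/2 = 0 from rfl, Finset.Icc_eq_empty (by omega), Finset.sum_empty]
          norm_num
        have hB1 : valB q n 1 = 0 := by
          simp only [valB]
          rw [show (1-1:ℕ)/2 = 0 from rfl, Finset.Icc_eq_empty (by omega), Finset.sum_empty]
          norm_num
        refine ⟨⟨?_, ?_⟩, ?_, ?_⟩
        · rw [hH100]; exact hαne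
        · rw [hH100, hαv, hA1]
        · rw [hH101, map_one]; exact one_ne_zero
        · rw [hH101, map_one, hB1, v_one' v hv_mul]
      · -- m = 2
        intro _ h2n
        have hφ1ne : Ev (Phi 1) ≠ 0 := hΦne 1 le_rfl (by omega)
        have hφ1v : v (Ev (Phi 1)) = q ^ (n - 1) := hΦv 1 le_rfl (by omega)
        have hx2 : Ev (H 2 0 0) = -(Ev (Phi 1)) + Ev (Polynomial.C a) * Ev (Polynomial.C a) := by
          rw [hxrec 0 0, hH100, hH000, map_one, mul_one]
          ring
        have hy2 : Ev (H 2 0 1) = Ev (Polynomial.C a) := by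
          rw [hxrec 0 1, hH101, hH001, map_zero, mul_zero, map_one, mul_one, neg_zero, add_zero]
        have hvaa : v (Ev (Polynomial.C a) * Ev (Polynomial.C a)) = 2 := by
          rw [hv_mul _ _ hαne hαne, hαv]; norm_num
        have hvn : v (-(Ev (Phi 1))) = q ^ (n-1) := by
          rw [v_neg' v hv_mul _ hφ1ne, hφ1v]
        have hlt : v (-(Ev (Phi 1))) < v (Ev (Polynomial.C a) * Ev (Polynomial.C a)) := by
          rw [hvaa, hvn]
          linarith [hqle1 (n-1)]
        obtain ⟨hne, hveq⟩ := v_add_eq_left' v hv_mul hv_add _ _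
          (neg_ne_zero.2 hφ1ne) (mul_ne_zero hαne hαne) hlt
        have hA2 : valA q n 2 = q ^ (n-1) := by
          simp only [valA]
          rw [show (2:ℕ)/2 = 1 from rfl, Finset.Icc_self, Finset.sum_singleton,
            show n - 2*1 + 1 = n - 1 by omega]
          norm_num
        have hB2 : valB q n 2 = 1 := by
          simp only [valB]
          rw [show (2-1:ℕ)/2 = 0 from rfl, Finset.Icc_eq_empty (by omega), Finset.sum_empty]
          norm_num
        refine ⟨⟨?_, ?_⟩, ?_, ?_⟩
        · rw [hx2]; exact hne
        · rw [hx2, hveq, hvn, hA2]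
        · rw [hy2]; exact hαne
        · rw [hy2, hαv, hB2]
      · -- m = k + 3
        intro _ hmn
        obtain ⟨⟨hx1ne, hx1v⟩, ⟨hy1ne, hy1v⟩⟩ := IH (k+2) (by omega) (by omega) (by omega)
        obtain ⟨⟨hx2ne, hx2v⟩, ⟨hy2ne, hy2v⟩⟩ := IH (k+1) (by omega) (by omega) (by omega)
        have hφne' : Ev (Phi (k+2)) ≠ 0 := hΦne (k+2) (by omega) (by omega)
        have hφv' : v (Ev (Phi (k+2))) = q ^ (n - (k+2)) := hΦv (k+2) (by omega) (by omega)
        have hxe := hxrec (k+1) (0 : Fin 2)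
        have hye := hxrec (k+1) (1 : Fin 2)
        rw [show k+1+2 = k+3 from rfl] at hxe hye
        -- x part
        have hXu_ne : Ev (Polynomial.C a) * Ev (H (k+2) 0 0) ≠ 0 := mul_ne_zero hαne hx1ne
        have hXu_v : v (Ev (Polynomial.C a) * Ev (H (k+2) 0 0)) = 1 + valA q n (k+2) := by
          rw [hv_mul _ _ hαne hx1ne, hαv, hx1v]
        have hXw_ne : -(Ev (Phi (k+2)) * Ev (H (k+1) 0 0)) ≠ 0 :=
          neg_ne_zero.2 (mul_ne_zero hφne' hx2ne)
        have hXw_v : v (-(Ev (Phi (k+2)) * Ev (H (k+1) 0 0))) = q ^ (n - (k+2)) + valA q n (k+1) := by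
          rw [v_neg' v hv_mul _ (mul_ne_zero hφne' hx2ne), hv_mul _ _ hφne' hx2ne, hφv', hx2v]
        -- y part
        have hYu_ne : Ev (Polynomial.C a) * Ev (H (k+2) 0 1) ≠ 0 := mul_ne_zero hαne hy1ne
        have hYu_v : v (Ev (Polynomial.C a) * Ev (H (k+2) 0 1)) = 1 + valB q n (k+2) := by
          rw [hv_mul _ _ hαne hy1ne, hαv, hy1v]
        have hYw_ne : -(Ev (Phi (k+2)) * Ev (H (k+1) 0 1)) ≠ 0 :=
          neg_ne_zero.2 (mul_ne_zero hφne' hy2ne)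
        have hYw_v : v (-(Ev (Phi (k+2)) * Ev (H (k+1) 0 1))) = q ^ (n - (k+2)) + valB q n (k+1) := by
          rw [v_neg' v hv_mul _ (mul_ne_zero hφne' hy2ne), hv_mul _ _ hφne' hy2ne, hφv', hy2v]
        by_cases hpar : (k+3) % 2 = 1
        · -- m odd : x is a-dominant, y is Φ-dominant
          -- x part
          have hAm : valA q n (k+3) = 1 + valA q n (k+2) := valA_odd q n (k+3) hpar
          have hA2' : valA q n (k+2) = q ^ (n - (k+2) + 1) + valA q n k :=
            valA_even q n (k+2) (by omega) (by omega)
          have hA1' : valA q n (k+1) = 1 + valA q n k := valA_odd q n (k+1) (by omega)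
          have hXlt : v (Ev (Polynomial.C a) * Ev (H (k+2) 0 0))
              < v (-(Ev (Phi (k+2)) * Ev (H (k+1) 0 0))) := by
            rw [hXu_v, hXw_v, hA2', hA1']
            have := hqlt (n - (k+2)) (n - (k+2) + 1) (by omega)
            linarith
          obtain ⟨hXne, hXv⟩ := v_add_eq_left' v hv_mul hv_add _ _ hXu_ne hXw_ne hXlt
          -- y part
          have hBm : valB q n (k+3) = q ^ (n - (k+3) + 1) + valB q n (k+1) :=
            valB_odd q n (k+3) (by omega) hmn hpar
          have hB1' : valB q n (k+2) = 1 + valB q n (k+1) := valB_even q n (k+2) (by omega) (by omega)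
          have hYlt : v (-(Ev (Phi (k+2)) * Ev (H (k+1) 0 1)))
              < v (Ev (Polynomial.C a) * Ev (H (k+2) 0 1)) := by
            rw [hYu_v, hYw_v, hB1']
            have := hqle1 (n - (k+2))
            linarith
          obtain ⟨hYne, hYv⟩ := v_add_eq_left' v hv_mul hv_add _ _ hYw_ne hYu_ne hYlt
          have hye' : Ev (H (k+3) 0 1) = -(Ev (Phi (k+2)) * Ev (H (k+1) 0 1))
              + Ev (Polynomial.C a) * Ev (H (k+2) 0 1) := by rw [hye]; ring
          refine ⟨⟨?_, ?_⟩, ?_, ?_⟩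
          · rw [hxe]; exact hXne
          · rw [hxe, hXv, hXu_v, hAm]
          · rw [hye']; exact hYne
          · rw [hye', hYv, hYw_v, hBm, show n - (k+2) = n - (k+3) + 1 by omega]
        · -- m even : x is Φ-dominant, y is a-dominant
          have hpar' : (k+3) % 2 = 0 := by omega
          -- x part
          have hAm : valA q n (k+3) = q ^ (n - (k+3) + 1) + valA q n (k+1) :=
            valA_even q n (k+3) (by omega) hpar'
          have hA1' : valA q n (k+2) = 1 + valA q n (k+1) := valA_odd q n (k+2) (by omega)
          have hXlt : v (-(Ev (Phi (k+2)) * Ev (H (k+1) 0 0)))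
              < v (Ev (Polynomial.C a) * Ev (H (k+2) 0 0)) := by
            rw [hXu_v, hXw_v, hA1']
            have := hqle1 (n - (k+2))
            linarith
          obtain ⟨hXne, hXv⟩ := v_add_eq_left' v hv_mul hv_add _ _ hXw_ne hXu_ne hXlt
          have hxe' : Ev (H (k+3) 0 0) = -(Ev (Phi (k+2)) * Ev (H (k+1) 0 0))
              + Ev (Polynomial.C a) * Ev (H (k+2) 0 0) := by rw [hxe]; ring
          -- y part
          have hBm : valB q n (k+3) = 1 + valB q n (k+2) := valB_even q n (k+3) (by omega) hpar'
          have hB2' : valB q n (k+2) = q ^ (n - (k+2) + 1) + valB q n k :=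
            valB_odd q n (k+2) (by omega) (by omega) (by omega)
          have hB1' : valB q n (k+1) = 1 + valB q n k := valB_even q n (k+1) (by omega) (by omega)
          have hYlt : v (Ev (Polynomial.C a) * Ev (H (k+2) 0 1))
              < v (-(Ev (Phi (k+2)) * Ev (H (k+1) 0 1))) := by
            rw [hYu_v, hYw_v, hB2', hB1']
            have := hqlt (n - (k+2)) (n - (k+2) + 1) (by omega)
            linarith
          obtain ⟨hYne, hYv⟩ := v_add_eq_left' v hv_mul hv_add _ _ hYu_ne hYw_ne hYlt
          refine ⟨⟨?_, ?_⟩, ?_, ?_⟩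
          · rw [hxe']; exact hXne
          · rw [hxe', hXv, hXw_v, hAm, show n - (k+2) = n - (k+3) + 1 by omega]
          · rw [hye]; exact hYne
          · rw [hye, hYv, hYu_v, hBm]
  obtain ⟨⟨hxne, hxv⟩, ⟨hyne, hyv⟩⟩ := key n hn le_rfl
  -- second row vanishes
  have hrow2n : ∀ j : Fin 2, ev (H n 1 j) = 0 := by
    intro j
    obtain ⟨m, rfl⟩ : ∃ m, n = m + 1 := ⟨n - 1, by omega⟩
    rw [hev', hrow2 m j, neg_mul, map_neg, map_mul, hΦn0, zero_mul, neg_zero]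
  refine ⟨hrow2n 0, hrow2n 1, ?_, ?_⟩
  · -- odd case
    intro hodd
    constructor
    · rw [hev', hxv]
      simp only [valA]
      rw [if_pos hodd, show n / 2 = (n-1)/2 by omega]
      congr 1
      refine sum_Icc_flip ((n-1)/2) _ _ ?_
      intro j h1 h2
      rw [← inv_pow]
      congr 1
      omega
    · rw [hev', hyv]
      simp only [valB]
      rw [if_neg (by omega)]
      rw [zero_add]
      refine sum_Icc_flip ((n-1)/2) _ _ ?_
      intro j h1 h2
      rw [← inv_pow]
      congr 1
      omega
  · -- even case
    intro heven
    constructor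
    · rw [hev', hxv]
      simp only [valA]
      rw [if_neg (by omega), zero_add]
      refine sum_Icc_flip (n/2) _ _ ?_
      intro j h1 h2
      rw [← inv_pow]
      congr 1
      omega
    · rw [hev', hyv]
      simp only [valB]
      rw [if_pos heven, show (n-1)/2 = n/2 - 1 by omega]
      congr 1
      refine sum_Icc_flip (n/2 - 1) _ _ ?_
      intro j h1 h2
      rw [← inv_pow]
      congr 1
      omega
end

section
/- Let p be an odd prime and n ≥ 1. With a = 0, C_i := [[0, 1], [−Φ_i, 0]] ∈ M_2(ℤ_p[X]) and H_n := C_n·C_{n−1}···C_1, write (H_n^♯, H_n^♭) for the first row of H_n, and evaluate all entries at ε_n = ζ_{p^n} − 1. Then both entries of the second row of H_n(ε_n) are zero, and: if n is odd, H_n^♯(ε_n) = 0 and v_p(H_n^♭(ε_n)) = Σ_{i=1}^{(n−1)/2} p^{−(2i−1)}; if n is even, v_p(H_n^♯(ε_n)) = Σ_{i=1}^{n/2} p^{−(2i−1)} and H_n^♭(ε_n) = 0. -/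
section ValLemmas
variable {K : Type*} [Field K] (v : K → ℚ)
  (hv_mul : ∀ x y : K, x ≠ 0 → y ≠ 0 → v (x * y) = v x + v y)
  (hv_add : ∀ x y : K, x ≠ 0 → y ≠ 0 → x + y ≠ 0 → min (v x) (v y) ≤ v (x + y))

include hv_mul in
lemma myv_one : v 1 = 0 := by
  have := hv_mul 1 1 one_ne_zero one_ne_zero; simp at this; linarith

include hv_mul in
lemma myv_neg {x : K} (hx : x ≠ 0) : v (-x) = v x := by
  have h1 : v (-1 : K) = 0 := by
    have := hv_mul (-1) (-1) (by norm_num) (by norm_num)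
    simp [myv_one v hv_mul] at this; linarith
  have := hv_mul (-1) x (by norm_num) hx
  simp only [neg_one_mul] at this
  rw [this, h1, zero_add]

include hv_mul in
lemma myv_pow {x : K} (hx : x ≠ 0) (m : ℕ) : v (x ^ m) = m * v x := by
  induction m with
  | zero => simp [myv_one v hv_mul]
  | succ k ih =>
      rw [pow_succ, hv_mul _ _ (pow_ne_zero _ hx) hx, ih]
      push_cast; ring

include hv_mul hv_add in
lemma myv_add_strict {x y : K} (hx : x ≠ 0) (hy : y ≠ 0) (hlt : v x < v y) :
    x + y ≠ 0 ∧ v (x + y) = v x := by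
  have hne : x + y ≠ 0 := by
    intro h
    have hyx : y = -x := by linear_combination h
    rw [hyx, myv_neg v hv_mul hx] at hlt; exact lt_irrefl _ hlt
  refine ⟨hne, le_antisymm ?_ ?_⟩
  · have h3 := hv_add (x + y) (-y) hne (neg_ne_zero.2 hy) (by simpa using hx)
    have hxe : (x + y) + -y = x := by ring
    rw [hxe, myv_neg v hv_mul hy] at h3
    rcases min_cases (v (x+y)) (v y) with ⟨hm, _⟩ | ⟨hm, hc⟩
    · rw [hm] at h3; exact h3
    · rw [hm] at h3; exact absurd (lt_of_lt_of_le hlt h3) (lt_irrefl _)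
  · calc v x = min (v x) (v y) := (min_eq_left hlt.le).symm
      _ ≤ v (x + y) := hv_add x y hx hy hne

include hv_mul hv_add in
lemma myv_sum_lt {ι : Type*} (s : Finset ι) (x : ι → K) (c : ℚ)
    (hne : ∀ i ∈ s, x i ≠ 0) (hc : ∀ i ∈ s, c < v (x i)) :
    (∑ i ∈ s, x i) = 0 ∨ ((∑ i ∈ s, x i) ≠ 0 ∧ c < v (∑ i ∈ s, x i)) := by
  classical
  induction s using Finset.induction_on with
  | empty => simp
  | @insert a s' hni ih =>
      rw [Finset.sum_insert hni]
      have ha := hc a (Finset.mem_insert_self a s')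
      have hxa := hne a (Finset.mem_insert_self a s')
      rcases ih (fun i hi => hne i (Finset.mem_insert_of_mem hi))
        (fun i hi => hc i (Finset.mem_insert_of_mem hi)) with h0 | ⟨hs, hcs⟩
      · rw [h0, add_zero]; exact Or.inr ⟨hxa, ha⟩
      · by_cases hz : x a + ∑ i ∈ s', x i = 0
        · exact Or.inl hz
        · refine Or.inr ⟨hz, ?_⟩
          have := hv_add (x a) _ hxa hs hz
          exact lt_of_lt_of_le (lt_min ha hcs) this

include hv_mul hv_add in
lemma myv_sum_strictmin {ι : Type*} (s : Finset ι) (x : ι → K) (i0 : ι) (hi0 : i0 ∈ s)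
    (hne : ∀ i ∈ s, x i ≠ 0)
    (hmin : ∀ i ∈ s, i ≠ i0 → v (x i0) < v (x i)) :
    (∑ i ∈ s, x i) ≠ 0 ∧ v (∑ i ∈ s, x i) = v (x i0) := by
  classical
  rw [← Finset.add_sum_erase s x hi0]
  rcases myv_sum_lt v hv_mul hv_add (s.erase i0) x (v (x i0))
      (fun i hi => hne i (Finset.mem_of_mem_erase hi))
      (fun i hi => hmin i (Finset.mem_of_mem_erase hi) (Finset.ne_of_mem_erase hi))
    with h0 | ⟨hs, hcs⟩
  · rw [h0, add_zero]; exact ⟨hne i0 hi0, rfl⟩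
  · exact myv_add_strict v hv_mul hv_add (hne i0 hi0) hs hcs

include hv_mul in
lemma myv_prod {ι : Type*} (s : Finset ι) (x : ι → K)
    (hne : ∀ i ∈ s, x i ≠ 0) :
    (∏ i ∈ s, x i) ≠ 0 ∧ v (∏ i ∈ s, x i) = ∑ i ∈ s, v (x i) := by
  classical
  induction s using Finset.induction_on with
  | empty => simp [myv_one v hv_mul]
  | @insert a s' hni ih =>
      have hxa := hne a (Finset.mem_insert_self a s')
      obtain ⟨hp, hv⟩ := ih (fun i hi => hne i (Finset.mem_insert_of_mem hi))
      rw [Finset.prod_insert hni, Finset.sum_insert hni]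
      exact ⟨mul_ne_zero hxa hp, by rw [hv_mul _ _ hxa hp, hv]⟩

end ValLemmas


section Key
variable {p : ℕ} [Fact p.Prime] {K : Type*} [Field K] [Algebra ℚ_[p] K]
  (v : K → ℚ)
  (hv_mul : ∀ x y : K, x ≠ 0 → y ≠ 0 → v (x * y) = v x + v y)
  (hv_add : ∀ x y : K, x ≠ 0 → y ≠ 0 → x + y ≠ 0 → min (v x) (v y) ≤ v (x + y))
  (hv_ext : ∀ x : ℚ_[p], x ≠ 0 → v (algebraMap ℚ_[p] K x) = (x.valuation : ℚ))

include hv_ext in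
lemma myv_natCast (m : ℕ) (hm : m ≠ 0) : v ((m : K)) = (padicValNat p m : ℚ) := by
  have h : ((m : K)) = algebraMap ℚ_[p] K (m : ℚ_[p]) := by rw [map_natCast]
  rw [h, hv_ext _ (Nat.cast_ne_zero.2 hm), Padic.valuation_natCast]
  norm_cast

include hv_mul hv_add hv_ext in
set_option maxHeartbeats 1000000 in
lemma myv_primroot_sub_one (hp : Odd p) : ∀ k : ℕ, ∀ ξ : K, IsPrimitiveRoot ξ (p ^ (k+1)) →
    ξ - 1 ≠ 0 ∧ v (ξ - 1) = (((p:ℚ) - 1) * (p:ℚ) ^ k)⁻¹ := by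
  haveI : CharZero K := charZero_of_injective_algebraMap (algebraMap ℚ_[p] K).injective
  have hpp : p.Prime := Fact.out
  have hp3 : 3 ≤ p := by
    have h2 := hpp.two_le
    rcases hp with ⟨m, hm⟩; omega
  have hp3Q : (3:ℚ) ≤ (p:ℚ) := by exact_mod_cast hp3
  -- common facts about the binomial sum, for any ξ with ξ - 1 ≠ 0
  have common : ∀ ξ : K, ξ - 1 ≠ 0 →
      (ξ ^ p - 1 = ∑ j ∈ Finset.Icc 1 p, ((p.choose j : K) * (ξ - 1) ^ j)) ∧
      (∀ j ∈ Finset.Icc 1 p, ((p.choose j : K) * (ξ - 1) ^ j) ≠ 0) ∧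
      (∀ j ∈ Finset.Icc 1 p, v ((p.choose j : K) * (ξ - 1) ^ j)
          = v ((p.choose j : K)) + j * v (ξ - 1)) ∧
      (∀ j, 1 ≤ j → j < p → (1:ℚ) ≤ v ((p.choose j : K))) ∧
      (v ((p.choose p : K)) = 0) ∧ (v ((p.choose 1 : K)) = 1) := by
    intro ξ hε
    refine ⟨?_, ?_, ?_, ?_, ?_, ?_⟩
    · have hexp : ξ = (ξ - 1) + 1 := by ring
      calc ξ ^ p - 1 = ((ξ - 1) + 1) ^ p - 1 := by rw [← hexp]
        _ = (∑ j ∈ Finset.range (p+1), (ξ-1)^j * 1^(p-j) * (p.choose j : K)) - 1 := by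
              rw [add_pow]
        _ = _ := by
              have hr : Finset.range (p+1) = insert 0 (Finset.Icc 1 p) := by
                ext a; simp; omega
              rw [hr, Finset.sum_insert (by simp)]
              simp [mul_comm]
    · intro j hj
      simp only [Finset.mem_Icc] at hj
      exact mul_ne_zero (Nat.cast_ne_zero.2 (Nat.choose_pos hj.2).ne') (pow_ne_zero _ hε)
    · intro j hj
      simp only [Finset.mem_Icc] at hj
      rw [hv_mul _ _ (Nat.cast_ne_zero.2 (Nat.choose_pos hj.2).ne') (pow_ne_zero _ hε),
        myv_pow v hv_mul hε]
    · intro j h1 h2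
      rw [myv_natCast v hv_ext _ (Nat.choose_pos h2.le).ne']
      exact_mod_cast one_le_padicValNat_of_dvd (Nat.choose_pos h2.le).ne'
        (hpp.dvd_choose_self (by omega) h2)
    · simp [Nat.choose_self, myv_one v hv_mul]
    · rw [Nat.choose_one_right, myv_natCast v hv_ext _ hpp.pos.ne',
        padicValNat.self hpp.one_lt]
      norm_num
  have hmemp : p ∈ Finset.Icc 1 p := Finset.mem_Icc.2 ⟨hpp.pos, le_refl p⟩
  have hmem1 : 1 ∈ Finset.Icc 1 p := Finset.mem_Icc.2 ⟨le_refl 1, hpp.pos⟩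
  intro k
  induction k with
  | zero =>
      intro ξ hξ
      have hξ1 : ξ ≠ 1 := hξ.ne_one (by simpa using hpp.one_lt)
      have hε : ξ - 1 ≠ 0 := sub_ne_zero.2 hξ1
      obtain ⟨hbin, hxne, hxv, hvC1, hvCp, hvCone⟩ := common ξ hε
      set t := v (ξ - 1) with ht
      have hS0 : (∑ j ∈ Finset.Icc 1 p, ((p.choose j : K) * (ξ - 1) ^ j)) = 0 := by
        rw [← hbin]
        have h1 := hξ.pow_eq_one
        rw [pow_one] at h1
        simp [h1]
      have hTgt : (((p:ℚ) - 1) * (p:ℚ) ^ (0:ℕ))⁻¹ = ((p:ℚ) - 1)⁻¹ := by norm_num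
      rw [hTgt]
      refine ⟨hε, ?_⟩
      rcases lt_trichotomy t ((p:ℚ) - 1)⁻¹ with hlt | heq | hgt
      · exfalso
        have h0 : (0:ℚ) < (p:ℚ) - 1 := by linarith
        have h1pt : t * ((p:ℚ) - 1) < 1 := by
          calc t * ((p:ℚ) - 1) < ((p:ℚ)-1)⁻¹ * ((p:ℚ)-1) := by
                exact mul_lt_mul_of_pos_right hlt h0
            _ = 1 := inv_mul_cancel₀ (ne_of_gt h0)
        have hmin : ∀ j ∈ Finset.Icc 1 p, j ≠ p →
            v ((p.choose p : K) * (ξ - 1) ^ p) < v ((p.choose j : K) * (ξ - 1) ^ j) := by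
          intro j hj hjp
          have hjm := Finset.mem_Icc.mp hj
          rw [hxv p hmemp, hxv j hj, hvCp, zero_add]
          have hC := hvC1 j hjm.1 (by omega)
          have hjQ : (1:ℚ) ≤ (j:ℚ) := by exact_mod_cast hjm.1
          have hjQ2 : (j:ℚ) ≤ (p:ℚ) - 1 := by
            have hje : j + 1 ≤ p := by omega
            have := (Nat.cast_le (α := ℚ)).2 hje
            push_cast at this; linarith
          rcases le_or_gt t 0 with htz | htz
          · nlinarith [mul_le_mul_of_nonpos_right
              (show (1:ℚ) ≤ (p:ℚ) - (j:ℚ) by linarith) htz]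
          · nlinarith [mul_le_mul_of_nonneg_right
              (show (p:ℚ) - (j:ℚ) ≤ (p:ℚ) - 1 by linarith) htz.le]
        obtain ⟨hSne, _⟩ := myv_sum_strictmin v hv_mul hv_add _ _ p hmemp hxne hmin
        exact hSne hS0
      · exact heq
      · exfalso
        have h0 : (0:ℚ) < (p:ℚ) - 1 := by linarith
        have ht0 : 0 < t := lt_trans (inv_pos.2 h0) hgt
        have h1pt : 1 < t * ((p:ℚ) - 1) := by
          calc (1:ℚ) = ((p:ℚ)-1)⁻¹ * ((p:ℚ)-1) := (inv_mul_cancel₀ (ne_of_gt h0)).symm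
            _ < t * ((p:ℚ)-1) := mul_lt_mul_of_pos_right hgt h0
        have hmin : ∀ j ∈ Finset.Icc 1 p, j ≠ 1 →
            v ((p.choose 1 : K) * (ξ - 1) ^ 1) < v ((p.choose j : K) * (ξ - 1) ^ j) := by
          intro j hj hj1
          have hjm := Finset.mem_Icc.mp hj
          rw [hxv 1 hmem1, hxv j hj, hvCone]
          have hjQ : (2:ℚ) ≤ (j:ℚ) := by exact_mod_cast (by omega : 2 ≤ j)
          rcases eq_or_ne j p with rfl | hjp
          · rw [hvCp]
            push_cast
            nlinarith [h1pt]
          · have hC := hvC1 j hjm.1 (by omega)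
            push_cast
            nlinarith [mul_pos (show (0:ℚ) < (j:ℚ) - 1 by linarith) ht0]
        obtain ⟨hSne, _⟩ := myv_sum_strictmin v hv_mul hv_add _ _ 1 hmem1 hxne hmin
        exact hSne hS0
  | succ k ih =>
      intro ξ hξ
      have hξ1 : ξ ≠ 1 := hξ.ne_one (by
        have := hpp.one_lt
        have h1 : 1 < p ^ (k+1+1) := Nat.one_lt_pow (by omega) this
        exact h1)
      have hε : ξ - 1 ≠ 0 := sub_ne_zero.2 hξ1
      obtain ⟨hbin, hxne, hxv, hvC1, hvCp, hvCone⟩ := common ξ hε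
      set t := v (ξ - 1) with ht
      -- η := ξ^p is a primitive p^(k+1)-th root
      have hη : IsPrimitiveRoot (ξ ^ p) (p ^ (k+1)) :=
        hξ.pow (pow_pos hpp.pos _) (by rw [pow_succ]; ring)
      obtain ⟨hηne, hηval⟩ := ih (ξ ^ p) hη
      set A : ℚ := (((p:ℚ) - 1) * (p:ℚ) ^ k)⁻¹ with hA
      set T : ℚ := (((p:ℚ) - 1) * (p:ℚ) ^ (k+1))⁻¹ with hT
      have h0 : (0:ℚ) < (p:ℚ) - 1 := by linarith
      have hpk : (0:ℚ) < (p:ℚ) ^ k := by positivity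
      have hpk1 : (0:ℚ) < (p:ℚ) ^ (k+1) := by positivity
      have hApT : A = (p:ℚ) * T := by
        rw [hA, hT]
        field_simp
        ring
      have hT0 : 0 < T := by rw [hT]; positivity
      have hTle : T ≤ ((p:ℚ) - 1)⁻¹ := by
        rw [hT]
        apply inv_anti₀ h0
        nlinarith [one_le_pow₀ (by linarith : (1:ℚ) ≤ (p:ℚ)) (n := k+1)]
      have hA1 : A < 1 := by
        rw [hA]
        rw [inv_lt_one_iff₀]
        right
        nlinarith [one_le_pow₀ (by linarith : (1:ℚ) ≤ (p:ℚ)) (n := k)]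
      have hSv : v (∑ j ∈ Finset.Icc 1 p, ((p.choose j : K) * (ξ - 1) ^ j)) = A := by
        rw [← hbin]
        have hsub : ξ ^ p - 1 = (ξ ^ p) - 1 := rfl
        rw [hsub]
        exact hηval
      have hSne : (∑ j ∈ Finset.Icc 1 p, ((p.choose j : K) * (ξ - 1) ^ j)) ≠ 0 := by
        rw [← hbin]; exact hηne
      refine ⟨hε, ?_⟩
      rcases lt_trichotomy t T with hlt | heq | hgt
      · exfalso
        have h1pt : t * ((p:ℚ) - 1) < 1 := by
          have : t < ((p:ℚ)-1)⁻¹ := lt_of_lt_of_le hlt hTle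
          calc t * ((p:ℚ) - 1) < ((p:ℚ)-1)⁻¹ * ((p:ℚ)-1) :=
                mul_lt_mul_of_pos_right this h0
            _ = 1 := inv_mul_cancel₀ (ne_of_gt h0)
        have hmin : ∀ j ∈ Finset.Icc 1 p, j ≠ p →
            v ((p.choose p : K) * (ξ - 1) ^ p) < v ((p.choose j : K) * (ξ - 1) ^ j) := by
          intro j hj hjp
          have hjm := Finset.mem_Icc.mp hj
          rw [hxv p hmemp, hxv j hj, hvCp, zero_add]
          have hC := hvC1 j hjm.1 (by omega)
          have hjQ : (1:ℚ) ≤ (j:ℚ) := by exact_mod_cast hjm.1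
          have hjQ2 : (j:ℚ) ≤ (p:ℚ) - 1 := by
            have hje : j + 1 ≤ p := by omega
            have := (Nat.cast_le (α := ℚ)).2 hje
            push_cast at this; linarith
          rcases le_or_gt t 0 with htz | htz
          · nlinarith [mul_le_mul_of_nonpos_right
              (show (1:ℚ) ≤ (p:ℚ) - (j:ℚ) by linarith) htz]
          · nlinarith [mul_le_mul_of_nonneg_right
              (show (p:ℚ) - (j:ℚ) ≤ (p:ℚ) - 1 by linarith) htz.le]
        obtain ⟨_, hSmin⟩ := myv_sum_strictmin v hv_mul hv_add _ _ p hmemp hxne hmin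
        rw [hSv] at hSmin
        rw [hxv p hmemp, hvCp, zero_add] at hSmin
        -- A = p * t but A = p * T and t < T
        rw [hApT] at hSmin
        have hTt : T = t := by
          have hpQ0 : (p:ℚ) ≠ 0 := by linarith
          exact mul_left_cancel₀ hpQ0 hSmin
        linarith
      · exact heq
      · exfalso
        have ht0 : 0 < t := lt_trans hT0 hgt
        have hbig : ∀ j ∈ Finset.Icc 1 p, A < v ((p.choose j : K) * (ξ - 1) ^ j) := by
          intro j hj
          have hjm := Finset.mem_Icc.mp hj
          rw [hxv j hj]
          rcases eq_or_ne j p with rfl | hjp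
          · rw [hvCp, zero_add, hApT]
            exact mul_lt_mul_of_pos_left hgt (by linarith)
          · have hC := hvC1 j hjm.1 (by omega)
            have hjQ : (1:ℚ) ≤ (j:ℚ) := by exact_mod_cast hjm.1
            nlinarith [mul_le_mul_of_nonneg_right hjQ ht0.le]
        rcases myv_sum_lt v hv_mul hv_add _ _ A hxne hbig with h | ⟨_, h⟩
        · exact hSne h
        · rw [hSv] at h; exact lt_irrefl _ h
end Key


section Extra
variable {K : Type*} [Field K] (v : K → ℚ)
  (hv_mul : ∀ x y : K, x ≠ 0 → y ≠ 0 → v (x * y) = v x + v y)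

include hv_mul in
lemma myv_neg_pow {x : K} (hx : x ≠ 0) (s : ℕ) : v ((-1)^s * x) = v x := by
  rcases neg_one_pow_eq_or K s with h | h <;> rw [h]
  · rw [one_mul]
  · rw [neg_one_mul, myv_neg v hv_mul hx]

lemma my_sum_reindex (P : ℚ) (n r : ℕ) (hr : n % 2 ≠ r) (hr2 : r < 2) :
    ∑ i ∈ (Finset.Icc 1 n).filter (fun i => i % 2 = r), (P ^ (n - i))⁻¹
      = ∑ j ∈ Finset.Icc 1 (n / 2), (P ^ (2 * j - 1))⁻¹ := by
  apply Finset.sum_nbij' (i := fun a => (n - a + 1) / 2) (j := fun b => n + 1 - 2 * b)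
  · intro a ha
    simp only [Finset.mem_filter, Finset.mem_Icc] at ha ⊢
    omega
  · intro b hb
    simp only [Finset.mem_filter, Finset.mem_Icc] at hb ⊢
    omega
  · intro a ha
    simp only [Finset.mem_filter, Finset.mem_Icc] at ha
    omega
  · intro b hb
    simp only [Finset.mem_Icc] at hb
    omega
  · intro a ha
    simp only [Finset.mem_filter, Finset.mem_Icc] at ha
    have he : n - a = 2 * ((n - a + 1) / 2) - 1 := by omega
    rw [← he]
end Extra


set_option maxHeartbeats 2000000 in
/-- Valuations of the entries of `H_n(ε_n)` in the case `a = 0`. -/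
theorem H_matrix_valuation_at_eps_a_eq_zero {p : ℕ} [Fact p.Prime] (hp : Odd p)
    (n : ℕ) (hn : 1 ≤ n)
    -- a field containing `ℚ_p(ζ_{p^n})`
    {K : Type*} [Field K] [Algebra ℚ_[p] K]
    (ζ : K) (hζ : IsPrimitiveRoot ζ (p ^ n))
    -- the (unique) valuation on `K` extending the `p`-adic valuation of `ℚ_p`
    (v : K → ℚ)
    (hv_mul : ∀ x y : K, x ≠ 0 → y ≠ 0 → v (x * y) = v x + v y)
    (hv_add : ∀ x y : K, x ≠ 0 → y ≠ 0 → x + y ≠ 0 → min (v x) (v y) ≤ v (x + y))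
    (hv_ext : ∀ x : ℚ_[p], x ≠ 0 → v (algebraMap ℚ_[p] K x) = (x.valuation : ℚ))
    -- evaluation of polynomials at `ε_n = ζ − 1`
    (ev : Polynomial ℤ_[p] → K)
    (hev : ∀ q : Polynomial ℤ_[p],
      ev q = Polynomial.eval₂ ((algebraMap ℚ_[p] K).comp (PadicInt.Coe.ringHom)) (ζ - 1) q)
    -- `Φ_m = ω_m/ω_{m−1}` for `m ≥ 1`
    (Phi : ℕ → Polynomial ℤ_[p])
    (hPhi : ∀ m, 1 ≤ m → omegaPoly p (m - 1) * Phi m = omegaPoly p m)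
    -- `C_i = [[0, 1], [−Φ_i, 0]]` and `H_0 = 1`, `H_m = C_m·H_{m−1}`
    (C : ℕ → Matrix (Fin 2) (Fin 2) (Polynomial ℤ_[p]))
    (hC : ∀ i, C i = !![0, 1; -(Phi i), 0])
    (H : ℕ → Matrix (Fin 2) (Fin 2) (Polynomial ℤ_[p]))
    (hH0 : H 0 = 1) (hH : ∀ m, H (m + 1) = C (m + 1) * H m) :
    -- the second row of `H_n(ε_n)` vanishes
    ev (H n 1 0) = 0 ∧ ev (H n 1 1) = 0 ∧
    -- odd case
    (n % 2 = 1 →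
      ev (H n 0 0) = 0 ∧
      v (ev (H n 0 1)) = ∑ i ∈ Finset.Icc 1 ((n - 1) / 2), ((p : ℚ) ^ (2 * i - 1))⁻¹) ∧
    -- even case
    (n % 2 = 0 →
      v (ev (H n 0 0)) = ∑ i ∈ Finset.Icc 1 (n / 2), ((p : ℚ) ^ (2 * i - 1))⁻¹ ∧
      ev (H n 0 1) = 0) := by
  classical
  haveI : CharZero K := charZero_of_injective_algebraMap (algebraMap ℚ_[p] K).injective
  have hpp : p.Prime := Fact.out
  have hp3 : 3 ≤ p := by
    have h2 := hpp.two_le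
    rcases hp with ⟨m, hm⟩; omega
  have hp3Q : (3:ℚ) ≤ (p:ℚ) := by exact_mod_cast hp3
  set f : ℤ_[p] →+* K := (algebraMap ℚ_[p] K).comp PadicInt.Coe.ringHom with hf
  set E : Polynomial ℤ_[p] →+* K := Polynomial.eval₂RingHom f (ζ - 1) with hEdef
  have hevE : ∀ q : Polynomial ℤ_[p], ev q = E q := by
    intro q; rw [hev]; rfl
  have homega : ∀ m, E (omegaPoly p m) = ζ ^ (p ^ m) - 1 := by
    intro m
    rw [hEdef, omegaPoly]
    simp only [map_sub, map_pow, map_add, map_one, Polynomial.coe_eval₂RingHom,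
      Polynomial.eval₂_X, Polynomial.eval₂_one, Polynomial.eval₂_add]
    ring_nf
  have hprim : ∀ m, m < n → IsPrimitiveRoot (ζ ^ (p ^ m)) (p ^ (n - m)) := by
    intro m hm
    exact hζ.pow (pow_pos hpp.pos n) (by rw [← pow_add]; congr 1; omega)
  have hEfact : ∀ m, m < n → (ζ ^ (p ^ m) - 1 ≠ 0) ∧
      v (ζ ^ (p ^ m) - 1) = (((p:ℚ) - 1) * (p:ℚ) ^ (n - m - 1))⁻¹ := by
    intro m hm
    have h1 : n - m - 1 + 1 = n - m := by omega
    exact myv_primroot_sub_one v hv_mul hv_add hv_ext hp (n - m - 1) (ζ ^ (p ^ m))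
      (by rw [h1]; exact hprim m hm)
  have hEn : ζ ^ (p ^ n) - 1 = 0 := by rw [hζ.pow_eq_one]; ring
  set q : ℕ → K := fun m => E (Phi m) with hq
  have hrel : ∀ m, 1 ≤ m → (ζ ^ (p ^ (m - 1)) - 1) * q m = ζ ^ (p ^ m) - 1 := by
    intro m hm
    have h := congrArg E (hPhi m hm)
    rw [map_mul, homega, homega] at h
    exact h
  have hqn : q n = 0 := by
    have h := hrel n hn
    rw [hEn] at h
    exact (mul_eq_zero.mp h).resolve_left (hEfact (n - 1) (by omega)).1
  have hqv : ∀ m, 1 ≤ m → m < n → q m ≠ 0 ∧ v (q m) = ((p:ℚ) ^ (n - m))⁻¹ := by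
    intro m h1 h2
    obtain ⟨ha, hva⟩ := hEfact (m - 1) (by omega)
    obtain ⟨hb, hvb⟩ := hEfact m h2
    have h := hrel m h1
    have hqne : q m ≠ 0 := by
      intro h0; rw [h0, mul_zero] at h; exact hb h.symm
    refine ⟨hqne, ?_⟩
    have hvmul := hv_mul _ _ ha hqne
    rw [h, hvb, hva] at hvmul
    obtain ⟨e, hee⟩ : ∃ e, n - m = e + 1 := ⟨n - m - 1, by omega⟩
    have he2 : n - (m - 1) - 1 = e + 1 := by omega
    have he3 : n - m - 1 = e := by omega
    rw [he2, he3] at hvmul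
    rw [hee]
    have hne1 : ((p:ℚ) - 1) ≠ 0 := by linarith
    have hne2 : (p:ℚ) ≠ 0 := by linarith
    have hne3 : ((p:ℚ)) ^ e ≠ 0 := pow_ne_zero _ hne2
    have hvq : v (q m) = (((p:ℚ) - 1) * (p:ℚ) ^ e)⁻¹ - (((p:ℚ) - 1) * (p:ℚ) ^ (e+1))⁻¹ := by
      linarith
    rw [hvq, pow_succ]
    field_simp
  -- the evaluated matrices
  have hCmap : ∀ i, (C i).map ⇑E = !![(0:K), 1; -(q i), 0] := by
    intro i
    rw [hC i]
    ext a b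
    fin_cases a <;> fin_cases b <;> simp [Matrix.map_apply, hq]
  have hmap : ∀ m, (H (m+1)).map ⇑E = ((C (m+1)).map ⇑E) * (H m).map ⇑E := by
    intro m; rw [hH m]; exact Matrix.map_mul
  set Po : ℕ → K := fun m => ∏ i ∈ (Finset.Icc 1 m).filter (fun i => i % 2 = 1), q i with hPo
  set Pe : ℕ → K := fun m => ∏ i ∈ (Finset.Icc 1 m).filter (fun i => i % 2 = 0), q i with hPe
  have hinsert : ∀ m r : ℕ, (m+1) % 2 = r → r < 2 →
      (Finset.Icc 1 (m+1)).filter (fun i => i % 2 = r)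
        = insert (m+1) ((Finset.Icc 1 m).filter (fun i => i % 2 = r)) := by
    intro m r h1 h2
    ext a
    simp only [Finset.mem_filter, Finset.mem_Icc, Finset.mem_insert]
    omega
  have hskip : ∀ m r : ℕ, (m+1) % 2 ≠ r →
      (Finset.Icc 1 (m+1)).filter (fun i => i % 2 = r)
        = (Finset.Icc 1 m).filter (fun i => i % 2 = r) := by
    intro m r h1
    ext a
    simp only [Finset.mem_filter, Finset.mem_Icc]
    omega
  have hnotmem : ∀ m r : ℕ, (m+1) ∉ (Finset.Icc 1 m).filter (fun i => i % 2 = r) := by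
    intro m r
    simp only [Finset.mem_filter, Finset.mem_Icc]
    omega
  have hPostep : ∀ m, (m+1) % 2 = 1 → Po (m+1) = q (m+1) * Po m := by
    intro m h
    rw [hPo]
    simp only
    rw [hinsert m 1 h (by omega), Finset.prod_insert (hnotmem m 1)]
  have hPoskip : ∀ m, (m+1) % 2 = 0 → Po (m+1) = Po m := by
    intro m h
    rw [hPo]; simp only
    rw [hskip m 1 (by omega)]
  have hPestep : ∀ m, (m+1) % 2 = 0 → Pe (m+1) = q (m+1) * Pe m := by
    intro m h
    rw [hPe]; simp only
    rw [hinsert m 0 h (by omega), Finset.prod_insert (hnotmem m 0)]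
  have hPeskip : ∀ m, (m+1) % 2 = 1 → Pe (m+1) = Pe m := by
    intro m h
    rw [hPe]; simp only
    rw [hskip m 0 (by omega)]
  -- main structural induction
  have hkey : ∀ m,
      (m % 2 = 0 → (H m).map ⇑E
        = !![(-1:K)^(m/2) * Po m, 0; 0, (-1:K)^(m/2) * Pe m]) ∧
      (m % 2 = 1 → (H m).map ⇑E
        = !![0, (-1:K)^(m/2) * Pe m; (-1:K)^(m/2+1) * Po m, 0]) := by
    intro m
    induction m with
    | zero =>
        constructor
        · intro _
          rw [hH0, Matrix.map_one _ (map_zero E) (map_one E)]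
          have h1 : Po 0 = 1 := by rw [hPo]; simp
          have h2 : Pe 0 = 1 := by rw [hPe]; simp
          rw [h1, h2, Matrix.one_fin_two]
          norm_num
        · intro h; simp at h
    | succ m ih =>
        rcases Nat.even_or_odd m with hm | hm
        · have hm2 : m % 2 = 0 := Nat.even_iff.mp hm
          constructor
          · intro h; omega
          · intro h
            rw [hmap, hCmap, ih.1 hm2, Matrix.mul_fin_two]
            have e1 : (m+1)/2 = m/2 := by omega
            have e2 : Pe (m+1) = Pe m := hPeskip m (by omega)
            have e3 : Po (m+1) = q (m+1) * Po m := hPostep m (by omega)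
            rw [e1, e2, e3]
            ext a b
            fin_cases a <;> fin_cases b <;> (simp; try ring)
        · have hm2 : m % 2 = 1 := Nat.odd_iff.mp hm
          constructor
          · intro h
            rw [hmap, hCmap, ih.2 hm2, Matrix.mul_fin_two]
            have e1 : (m+1)/2 = m/2 + 1 := by omega
            have e2 : Pe (m+1) = q (m+1) * Pe m := hPestep m (by omega)
            have e3 : Po (m+1) = Po m := hPoskip m (by omega)
            rw [e1, e2, e3]
            ext a b
            fin_cases a <;> fin_cases b <;> (simp; try ring)
          · intro h; omega
  have hent : ∀ a b, ev (H n a b) = ((H n).map ⇑E) a b := by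
    intro a b; rw [hevE]; rfl
  -- nonzero entries of filters
  have hall : ∀ r, r < 2 → n % 2 ≠ r →
      (∀ i ∈ (Finset.Icc 1 n).filter (fun i => i % 2 = r), q i ≠ 0) := by
    intro r h2 hr i hi
    simp only [Finset.mem_filter, Finset.mem_Icc] at hi
    exact (hqv i hi.1.1 (by omega)).1
  have hvsum : ∀ r, r < 2 → n % 2 ≠ r →
      v (∏ i ∈ (Finset.Icc 1 n).filter (fun i => i % 2 = r), q i)
        = ∑ j ∈ Finset.Icc 1 (n / 2), ((p:ℚ) ^ (2 * j - 1))⁻¹ ∧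
      (∏ i ∈ (Finset.Icc 1 n).filter (fun i => i % 2 = r), q i) ≠ 0 := by
    intro r h2 hr
    obtain ⟨hne, hval⟩ := myv_prod v hv_mul _ _ (hall r h2 hr)
    constructor
    · rw [hval]
      rw [← my_sum_reindex ((p:ℚ)) n r hr h2]
      apply Finset.sum_congr rfl
      intro i hi
      simp only [Finset.mem_filter, Finset.mem_Icc] at hi
      exact (hqv i hi.1.1 (by omega)).2
    · exact hne
  rcases Nat.even_or_odd n with hne | hno
  · -- n even
    have hn2 : n % 2 = 0 := Nat.even_iff.mp hne
    have hM := (hkey n).1 hn2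
    have hPe0 : Pe n = 0 := by
      rw [hPe]; simp only
      apply Finset.prod_eq_zero (i := n) _ hqn
      simp only [Finset.mem_filter, Finset.mem_Icc]
      omega
    obtain ⟨hPov, hPone⟩ := hvsum 1 (by omega) (by omega)
    refine ⟨?_, ?_, ?_, ?_⟩
    · rw [hent, hM]; simp
    · rw [hent, hM, hPe0]; simp
    · intro h; omega
    · intro _
      constructor
      · rw [hent, hM]
        simp only [Matrix.of_apply, Matrix.cons_val', Matrix.cons_val_zero, Matrix.empty_val',
          Matrix.cons_val_fin_one, Matrix.cons_val_one, Matrix.head_cons, Matrix.head_fin_const]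
        rw [myv_neg_pow v hv_mul (by rw [hPo]; exact hPone) (n/2)]
        rw [hPo]
        exact hPov
      · rw [hent, hM]; simp
  · -- n odd
    have hn2 : n % 2 = 1 := Nat.odd_iff.mp hno
    have hM := (hkey n).2 hn2
    have hPo0 : Po n = 0 := by
      rw [hPo]; simp only
      apply Finset.prod_eq_zero (i := n) _ hqn
      simp only [Finset.mem_filter, Finset.mem_Icc]
      omega
    obtain ⟨hPev, hPene⟩ := hvsum 0 (by omega) (by omega)
    refine ⟨?_, ?_, ?_, ?_⟩
    · rw [hent, hM, hPo0]; simp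
    · rw [hent, hM]; simp
    · intro _
      constructor
      · rw [hent, hM]; simp
      · rw [hent, hM]
        simp only [Matrix.of_apply, Matrix.cons_val', Matrix.cons_val_zero, Matrix.empty_val',
          Matrix.cons_val_fin_one, Matrix.cons_val_one, Matrix.head_cons, Matrix.head_fin_const]
        rw [myv_neg_pow v hv_mul (by rw [hPe]; exact hPene) (n/2)]
        have hnd : (n - 1) / 2 = n / 2 := by omega
        rw [hnd, hPe]
        exact hPev
    · intro h; omega
end
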